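/- arXiv:2005.04354 — 6 statements merged into one kernel-verified Lean document; each statement's English description precedes it below -/
import Mathlib

section
/- Let p ≥ 2, θ ∈ (0, 1/2), and let T and T' be trees on the vertex set {1,…,p}. For any samples x_1,…,x_n ∈ {0,1}^p, the log-likelihood comparison ∑_{k=1}^n log P_{T,θ}(x_k) ≥ ∑_{k=1}^n log P_{T',θ}(x_k) holds if and only if ∑_{{i,j}∈E(T)} Â_{i,j} ≥ ∑_{{i,j}∈E(T')} Â_{i,j}. Consequently, a tree T maximizes the likelihood of the samples over all trees on {1,…,p} if and only if its edge set is a maximum-weight spanning tree of the complete graph on {1,…,p} with edge weights Â_{i,j}. -/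
open scoped Classical BigOperators
open Filter

noncomputable section

/-- Symmetric pair weight `w(x i, x j)` lifted to unordered pairs. -/
def pairWeight (θ : ℝ) {p : ℕ} (x : Fin p → Bool) : Sym2 (Fin p) → ℝ :=
  Sym2.lift ⟨fun i j => if x i = x j then 1 - θ else θ, fun i j => by
    dsimp only
    by_cases h : x i = x j
    · rw [if_pos h, if_pos h.symm]
    · rw [if_neg h, if_neg (fun hh => h hh.symm)]⟩

/-- The homogeneous zero-external-field Ising tree distribution. -/
def isingP (θ : ℝ) {p : ℕ} (T : SimpleGraph (Fin p)) (x : Fin p → Bool) : ℝ :=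
  (1 / 2) * ∏ e ∈ T.edgeFinset, pairWeight θ x e

/-- Probability of an event `A` about `n` i.i.d. samples from pmf `P`. -/
def iidProb {p : ℕ} (P : (Fin p → Bool) → ℝ) (n : ℕ)
    (A : Set (Fin n → Fin p → Bool)) : ℝ :=
  ∑ xs : Fin n → Fin p → Bool, if xs ∈ A then ∏ k, P (xs k) else 0

/-- Empirical agreement weight. -/
def Ahat {p n : ℕ} (xs : Fin n → Fin p → Bool) (i j : Fin p) : ℝ :=
  ((Finset.univ.filter (fun k : Fin n => xs k i = xs k j)).card : ℝ) / n

/-- Empirical agreement weight on unordered pairs. -/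
def AhatSym {p n : ℕ} (xs : Fin n → Fin p → Bool) : Sym2 (Fin p) → ℝ :=
  Sym2.lift ⟨fun i j => Ahat xs i j, fun i j => by
    have h : (Finset.univ.filter fun k : Fin n => xs k i = xs k j)
        = (Finset.univ.filter fun k : Fin n => xs k j = xs k i) :=
      Finset.filter_congr (fun k _ => ⟨Eq.symm, Eq.symm⟩)
    simp only [Ahat, h]⟩

/-- The path (Markov chain) tree on 3 nodes with edges {1,2},{2,3}. -/
def chainA : SimpleGraph (Fin 3) := SimpleGraph.fromEdgeSet {s(0,1), s(1,2)}

def chainB : SimpleGraph (Fin 3) := SimpleGraph.fromEdgeSet {s(0,2), s(1,2)}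

def chainC : SimpleGraph (Fin 3) := SimpleGraph.fromEdgeSet {s(0,1), s(0,2)}

def path4 : SimpleGraph (Fin 4) := SimpleGraph.fromEdgeSet {s(0,1), s(1,2), s(2,3)}

def Kexp (θ : ℝ) : ℝ := -Real.log (1 - θ * (1 - Real.sqrt (4 * θ * (1 - θ))))

def sigmaSq (θ : ℝ) : ℝ := θ * Real.sqrt (4 * θ * (1 - θ)) * Real.exp (Kexp θ)

def zTheta (θ : ℝ) : ℝ := Real.sqrt (θ / (1 - θ))

def ftilde (θ : ℝ) (n : ℕ) : ℝ :=
  Real.exp (-(n : ℝ) * Kexp θ) / Real.sqrt (2 * Real.pi * sigmaSq θ * n)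
    * (1 + (1 - 3 * sigmaSq θ) / (8 * sigmaSq θ * n))

def fn (θ : ℝ) (n : ℕ) : ℝ :=
  ftilde θ n / (1 - zTheta θ)
    * (1 - zTheta θ * (1 + zTheta θ) / (2 * (1 - zTheta θ) ^ 2 * sigmaSq θ * n))

/-- Hamming distance. -/
def hamming {p : ℕ} (x y : Fin p → Bool) : ℕ :=
  (Finset.univ.filter (fun i => x i ≠ y i)).card

/-- Noisy (BSC with crossover probability q) version of a distribution. -/
def noisy (q : ℝ) {p : ℕ} (P : (Fin p → Bool) → ℝ) (y : Fin p → Bool) : ℝ :=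
  ∑ x : Fin p → Bool, q ^ hamming x y * (1 - q) ^ (p - hamming x y) * P x

def beta1 (θ q : ℝ) : ℝ :=
  ((1 - q) ^ 3 + q ^ 3) * (θ * (1 - θ) / 2) + q * (1 - q) * ((1 - θ * (1 - θ)) / 2)

def beta2 (θ q : ℝ) : ℝ :=
  ((1 - q) ^ 3 + q ^ 3) * (θ ^ 2 / 2) + q * (1 - q) * ((1 - θ ^ 2) / 2)

def Kq (θ q : ℝ) : ℝ :=
  -Real.log (1 - 4 * ((beta1 θ q + beta2 θ q) / 2 - Real.sqrt (beta1 θ q * beta2 θ q)))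

def mu2 (θ q : ℝ) : ℝ := 4 * Real.sqrt (beta1 θ q * beta2 θ q) * Real.exp (Kq θ q)

def zq (θ q : ℝ) : ℝ := Real.sqrt (beta2 θ q / beta1 θ q)

def ftildeq (θ q : ℝ) (n : ℕ) : ℝ :=
  Real.exp (-(n : ℝ) * Kq θ q) / Real.sqrt (2 * Real.pi * mu2 θ q * n)
    * (1 + (1 - 3 * mu2 θ q) / (8 * mu2 θ q * n))

def fnq (θ q : ℝ) (n : ℕ) : ℝ :=
  ftildeq θ q n / (1 - zq θ q)
    * (1 - zq θ q * (1 + zq θ q) / (2 * (1 - zq θ q) ^ 2 * mu2 θ q * n))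

/-- Marginal of a pmf on `{0,1}^p` on a single coordinate. -/
def marg1 {p : ℕ} (Q : (Fin p → Bool) → ℝ) (i : Fin p) (a : Bool) : ℝ :=
  ∑ x ∈ Finset.univ.filter (fun x : Fin p → Bool => x i = a), Q x

/-- Marginal of a pmf on `{0,1}^p` on a pair of coordinates. -/
def marg2 {p : ℕ} (Q : (Fin p → Bool) → ℝ) (i j : Fin p) (a b : Bool) : ℝ :=
  ∑ x ∈ Finset.univ.filter (fun x : Fin p → Bool => x i = a ∧ x j = b), Q x

/-- Kullback-Leibler divergence between pmfs on a finite type. -/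
def klDiv {X : Type*} [Fintype X] (Q P : X → ℝ) : ℝ :=
  ∑ x : X, Q x * Real.log (Q x / P x)

/-- Empirical mutual information between coordinates `i` and `j`. -/
def mutInf {p : ℕ} (Q : (Fin p → Bool) → ℝ) (i j : Fin p) : ℝ :=
  ∑ a : Bool, ∑ b : Bool,
    marg2 Q i j a b * Real.log (marg2 Q i j a b / (marg1 Q i a * marg1 Q j b))

end

noncomputable section AuxStmt0

lemma pairWeight_pos {θ : ℝ} (hθ0 : 0 < θ) (hθ1 : θ < 1 / 2) {p : ℕ}
    (x : Fin p → Bool) (e : Sym2 (Fin p)) : 0 < pairWeight θ x e := by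
  induction e using Sym2.ind with
  | _ i j =>
    show (0:ℝ) < if x i = x j then 1 - θ else θ
    split <;> linarith

lemma log_pairWeight {θ : ℝ} {p : ℕ} (x : Fin p → Bool) (i j : Fin p) :
    Real.log (pairWeight θ x s(i, j)) =
      Real.log θ + (Real.log (1 - θ) - Real.log θ) * (if x i = x j then (1:ℝ) else 0) := by
  show Real.log (if x i = x j then 1 - θ else θ) = _
  by_cases h : x i = x j <;> simp [h]

lemma nmul_AhatSym {p n : ℕ} (x : Fin n → Fin p → Bool) (i j : Fin p) :
    (n : ℝ) * AhatSym x s(i, j) =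
      ((Finset.univ.filter fun k : Fin n => x k i = x k j).card : ℝ) := by
  show (n : ℝ) * Ahat x i j = _
  rcases Nat.eq_zero_or_pos n with h | h
  · subst h
    simp [Ahat]
  · rw [Ahat, mul_div_cancel₀]
    exact Nat.cast_ne_zero.mpr h.ne'

lemma sum_log_pairWeight {θ : ℝ} {p n : ℕ}
    (x : Fin n → Fin p → Bool) (e : Sym2 (Fin p)) :
    ∑ k, Real.log (pairWeight θ (x k) e) =
      (n : ℝ) * Real.log θ + (Real.log (1 - θ) - Real.log θ) * ((n : ℝ) * AhatSym x e) := by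
  induction e using Sym2.ind with
  | _ i j =>
    simp only [log_pairWeight]
    rw [Finset.sum_add_distrib, Finset.sum_const, ← Finset.mul_sum, nmul_AhatSym]
    congr 1
    · simp [mul_comm]
    · congr 1
      rw [Finset.sum_boole]

lemma sum_log_ising {θ : ℝ} (hθ0 : 0 < θ) (hθ1 : θ < 1 / 2) {p n : ℕ}
    (T : SimpleGraph (Fin p)) (x : Fin n → Fin p → Bool) :
    ∑ k, Real.log (isingP θ T (x k)) =
      (n : ℝ) * Real.log (1 / 2) + (T.edgeFinset.card : ℝ) * ((n : ℝ) * Real.log θ)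
        + (Real.log (1 - θ) - Real.log θ) * ((n : ℝ) * ∑ e ∈ T.edgeFinset, AhatSym x e) := by
  have hlog : ∀ k, Real.log (isingP θ T (x k)) =
      Real.log (1 / 2) + ∑ e ∈ T.edgeFinset, Real.log (pairWeight θ (x k) e) := by
    intro k
    rw [isingP, Real.log_mul (by norm_num)
      (Finset.prod_ne_zero_iff.mpr fun e _ => (pairWeight_pos hθ0 hθ1 _ e).ne'),
      Real.log_prod fun e _ => (pairWeight_pos hθ0 hθ1 _ e).ne']
  simp only [hlog]
  rw [Finset.sum_add_distrib, Finset.sum_const, Finset.sum_comm]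
  simp only [sum_log_pairWeight]
  have h : (Real.log (1 - θ) - Real.log θ) * ((n : ℝ) * ∑ e ∈ T.edgeFinset, AhatSym x e)
      = ∑ e ∈ T.edgeFinset, (Real.log (1 - θ) - Real.log θ) * ((n : ℝ) * AhatSym x e) := by
    rw [Finset.mul_sum, Finset.mul_sum]
  rw [h, Finset.sum_add_distrib, Finset.sum_const, Finset.card_univ, Fintype.card_fin,
    nsmul_eq_mul]
  ring

lemma AhatSym_zero {p : ℕ} (x : Fin 0 → Fin p → Bool) (e : Sym2 (Fin p)) :
    AhatSym x e = 0 := by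
  induction e using Sym2.ind with
  | _ i j => show Ahat x i j = 0; simp [Ahat]

end AuxStmt0

/-- the log-likelihood comparison between two trees is equivalent to the
comparison of total empirical agreement weights, and consequently a tree maximizes the
likelihood over all trees iff it is a maximum-weight spanning tree for the weights `Â`. -/
theorem stmt0 (p n : ℕ) (hp : 2 ≤ p) (θ : ℝ) (hθ0 : 0 < θ) (hθ1 : θ < 1 / 2)
    (T T' : SimpleGraph (Fin p)) (hT : T.IsTree) (hT' : T'.IsTree)
    (x : Fin n → Fin p → Bool) :
    ((∑ k, Real.log (isingP θ T' (x k)) ≤ ∑ k, Real.log (isingP θ T (x k))) ↔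
      (∑ e ∈ T'.edgeFinset, AhatSym x e ≤ ∑ e ∈ T.edgeFinset, AhatSym x e)) ∧
    ((∀ T'' : SimpleGraph (Fin p), T''.IsTree →
        ∑ k, Real.log (isingP θ T'' (x k)) ≤ ∑ k, Real.log (isingP θ T (x k))) ↔
      (∀ T'' : SimpleGraph (Fin p), T''.IsTree →
        ∑ e ∈ T''.edgeFinset, AhatSym x e ≤ ∑ e ∈ T.edgeFinset, AhatSym x e)) := by

  have hc : 0 < Real.log (1 - θ) - Real.log θ :=
    sub_pos.mpr (Real.log_lt_log hθ0 (by linarith))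
  have key : ∀ S S' : SimpleGraph (Fin p), S.IsTree → S'.IsTree →
      ((∑ k, Real.log (isingP θ S' (x k)) ≤ ∑ k, Real.log (isingP θ S (x k))) ↔
        (∑ e ∈ S'.edgeFinset, AhatSym x e ≤ ∑ e ∈ S.edgeFinset, AhatSym x e)) := by
    intro S S' hS hS'
    rw [sum_log_ising hθ0 hθ1, sum_log_ising hθ0 hθ1]
    have hcard : S.edgeFinset.card = S'.edgeFinset.card := by
      have h1 := hS.card_edgeFinset
      have h2 := hS'.card_edgeFinset
      omega
    rw [hcard]
    rcases Nat.eq_zero_or_pos n with hn | hn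
    · subst hn
      simp [AhatSym_zero]
    · constructor
      · intro h
        have h2 := le_of_add_le_add_left h
        have h3 := le_of_mul_le_mul_left h2 hc
        exact le_of_mul_le_mul_left h3 (by exact_mod_cast hn)
      · intro h
        have hn' : (0:ℝ) < n := by exact_mod_cast hn
        have := mul_le_mul_of_nonneg_left
          (mul_le_mul_of_nonneg_left h hn'.le) hc.le
        linarith
  refine ⟨key T T' hT hT', ?_⟩
  exact ⟨fun h T'' hT'' => (key T T'' hT hT'').mp (h T'' hT''),
    fun h T'' hT'' => (key T T'' hT hT'').mpr (h T'' hT'')⟩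
end

section
/- Let p ≥ 2, θ ∈ (0, 1/2), and let T be a tree on {1,…,p}. For distinct vertices i and j whose graph distance in T equals d, the correlation decay property holds: P_{T,θ}({x : x_i = x_j}) = (1 + (1−2θ)^d)/2. In particular, this quantity is strictly decreasing in d, so for every non-edge pair {i,j} ∉ E(T) one has P_{T,θ}({x : x_i = x_j}) < 1 − θ. -/
open scoped Classical BigOperators
open Filter

namespace S2A
open scoped symmDiff
def sgn (b : Bool) : ℝ := if b then -1 else 1
lemma sgn_sq (b : Bool) : sgn b * sgn b = 1 := by cases b <;> simp [sgn]
def sgnE {p : ℕ} (x : Fin p → Bool) : Sym2 (Fin p) → ℝ :=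
  Sym2.lift ⟨fun i j => sgn (x i) * sgn (x j), fun _ _ => mul_comm _ _⟩
def eps (r : ℝ) (z : ZMod 2) : ℝ := if z = 1 then r else 1
lemma eps_add {r : ℝ} (hr : r * r = 1) (a b : ZMod 2) :
    eps r (a + b) = eps r a * eps r b := by
  have h : ∀ z : ZMod 2, z = 0 ∨ z = 1 := by decide
  rcases h a with rfl | rfl <;> rcases h b with rfl | rfl <;> simp [eps, hr]
def par {p : ℕ} (S : Finset (Sym2 (Fin p))) (v : Fin p) : ZMod 2 :=
  ∑ e ∈ S, if v ∈ e then 1 else 0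

lemma pairWeight_eq (θ : ℝ) {p : ℕ} (x : Fin p → Bool) (e : Sym2 (Fin p)) :
    pairWeight θ x e = (1 + (1 - 2*θ) * sgnE x e) / 2 := by
  induction e using Sym2.ind with
  | _ i j =>
    show (if x i = x j then 1 - θ else θ) = (1 + (1-2*θ) * (sgn (x i) * sgn (x j))) / 2
    by_cases h : x i = x j
    · rw [if_pos h, h, sgn_sq]; ring
    · rw [if_neg h]
      have : sgn (x i) * sgn (x j) = -1 := by
        cases hxi : x i <;> cases hxj : x j <;> simp_all [sgn]
      rw [this]; ring

lemma prod_eps_single {p : ℕ} (x : Fin p → Bool) (i j : Fin p) (hij : i ≠ j) :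
    ∏ v : Fin p, eps (sgn (x v)) (if v ∈ s(i,j) then 1 else 0)
      = sgn (x i) * sgn (x j) := by
  have h1 : ∀ v : Fin p, eps (sgn (x v)) (if v ∈ s(i,j) then 1 else 0)
      = (if v = i then sgn (x v) else 1) * (if v = j then sgn (x v) else 1) := by
    intro v
    rcases eq_or_ne v i with rfl | hvi
    · simp [eps, Sym2.mem_iff, hij]
    · rcases eq_or_ne v j with rfl | hvj
      · simp [eps, Sym2.mem_iff, hvi]
      · simp [eps, Sym2.mem_iff, hvi, hvj]
  rw [Finset.prod_congr rfl (fun v _ => h1 v), Finset.prod_mul_distrib]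
  rw [Finset.prod_ite_eq' Finset.univ i (fun v => sgn (x v)),
      Finset.prod_ite_eq' Finset.univ j (fun v => sgn (x v))]
  simp

lemma prod_sgnE_eq {p : ℕ} (x : Fin p → Bool) (S : Finset (Sym2 (Fin p)))
    (hS : ∀ e ∈ S, ¬ e.IsDiag) :
    ∏ e ∈ S, sgnE x e = ∏ v : Fin p, eps (sgn (x v)) (par S v) := by
  induction S using Finset.induction_on with
  | empty => simp [par, eps]
  | @insert a S ha ih =>
    have hna : ¬ a.IsDiag := hS a (Finset.mem_insert_self a S)
    have hpar : ∀ v, par (insert a S) v = (if v ∈ a then 1 else 0) + par S v := by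
      intro v; rw [par, Finset.sum_insert ha]; rfl
    rw [Finset.prod_insert ha, ih (fun e he => hS e (Finset.mem_insert_of_mem he))]
    rw [show (∏ v : Fin p, eps (sgn (x v)) (par (insert a S) v))
        = ∏ v : Fin p, eps (sgn (x v)) (if v ∈ a then 1 else 0) * eps (sgn (x v)) (par S v) from
      Finset.prod_congr rfl (fun v _ => by rw [hpar v, eps_add (sgn_sq (x v))]),
      Finset.prod_mul_distrib]
    congr 1
    induction a using Sym2.ind with
    | _ i j =>
      have hij : i ≠ j := by simpa using hna
      rw [prod_eps_single x i j hij]; rfl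

lemma sum_eps_bool (z : ZMod 2) : ∑ b : Bool, eps (sgn b) z = if z = 0 then 2 else 0 := by
  have h : ∀ z : ZMod 2, z = 0 ∨ z = 1 := by decide
  rcases h z with rfl | rfl <;> simp [eps, sgn]


lemma zmod2_add_self (a : ZMod 2) : a + a = 0 := by revert a; decide

lemma par_symmDiff {p : ℕ} (S S' : Finset (Sym2 (Fin p))) (v : Fin p) :
    par (S ∆ S') v = par S v + par S' v := by
  classical
  unfold par
  rw [symmDiff_def, Finset.sup_eq_union, Finset.sum_union (disjoint_sdiff_sdiff)]
  rw [show S \ S' = S \ (S ∩ S') from (Finset.sdiff_inter_self_left S S').symm,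
      show S' \ S = S' \ (S' ∩ S) from (Finset.sdiff_inter_self_left S' S).symm,
      Finset.sum_sdiff_eq_sub Finset.inter_subset_left,
      Finset.sum_sdiff_eq_sub Finset.inter_subset_left,
      Finset.inter_comm S' S]
  linear_combination -(zmod2_add_self (∑ e ∈ S ∩ S', if v ∈ e then (1 : ZMod 2) else 0))

lemma sum_prod_eps {p : ℕ} (c : Fin p → ZMod 2) :
    ∑ x : Fin p → Bool, ∏ v, eps (sgn (x v)) (c v)
      = if (∀ v, c v = 0) then (2:ℝ)^p else 0 := by
  rw [← Fintype.prod_sum fun v b => eps (sgn b) (c v)]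
  rw [Finset.prod_congr rfl (fun v _ => sum_eps_bool (c v))]
  by_cases h : ∀ v, c v = 0
  · rw [if_pos h, Finset.prod_congr rfl (fun v _ => if_pos (h v))]
    simp [Finset.prod_const]
  · rw [if_neg h]
    push_neg at h
    obtain ⟨v, hv⟩ := h
    exact Finset.prod_eq_zero (Finset.mem_univ v) (if_neg hv)

lemma gsum {p : ℕ} (θ : ℝ) (T : SimpleGraph (Fin p))
    (hE : T.edgeFinset.card + 1 = p) (δ : Fin p → ZMod 2) :
    ∑ x : Fin p → Bool, isingP θ T x * ∏ v, eps (sgn (x v)) (δ v)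
      = ∑ S ∈ T.edgeFinset.powerset,
          (1 - 2*θ)^S.card * (if par S = δ then 1 else 0) := by
  classical
  have h2p : (2:ℝ)^p ≠ 0 := by positivity
  have hising : ∀ x : Fin p → Bool,
      isingP θ T x = (∑ S ∈ T.edgeFinset.powerset,
        (1-2*θ)^S.card * ∏ e ∈ S, sgnE x e) / 2^p := by
    intro x
    rw [isingP, Finset.prod_congr rfl (fun e _ => pairWeight_eq θ x e),
        Finset.prod_div_distrib, Finset.prod_const]
    rw [Finset.prod_congr rfl (fun e (_ : e ∈ T.edgeFinset) =>
         (by ring : 1 + (1-2*θ) * sgnE x e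
            = (fun e => (1-2*θ) * sgnE x e) e + (fun _ => (1:ℝ)) e)),
        Finset.prod_add]
    have hterm : ∀ S ∈ T.edgeFinset.powerset,
        (∏ e ∈ S, (1-2*θ) * sgnE x e) * (∏ e ∈ T.edgeFinset \ S, (1:ℝ))
          = (1-2*θ)^S.card * ∏ e ∈ S, sgnE x e := by
      intro S _
      rw [Finset.prod_mul_distrib, Finset.prod_const, Finset.prod_const, one_pow, mul_one]
    rw [Finset.sum_congr rfl hterm,
        show ((2:ℝ)^p) = 2^T.edgeFinset.card * 2 from by
          rw [← pow_succ]; exact congrArg (fun n => (2:ℝ)^n) hE.symm]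
    ring
  rw [Finset.sum_congr rfl (fun x (_ : x ∈ Finset.univ) => by rw [hising x])]
  have key : ∀ x : Fin p → Bool,
      (∑ S ∈ T.edgeFinset.powerset, (1-2*θ)^S.card * ∏ e ∈ S, sgnE x e) / 2^p
        * ∏ v, eps (sgn (x v)) (δ v)
      = ∑ S ∈ T.edgeFinset.powerset, (1-2*θ)^S.card / 2^p
          * ∏ v, eps (sgn (x v)) (par S v + δ v) := by
    intro x
    rw [div_mul_eq_mul_div, Finset.sum_mul, Finset.sum_div]
    refine Finset.sum_congr rfl (fun S hS => ?_)
    have hnd : ∀ e ∈ S, ¬ e.IsDiag := fun e he =>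
      T.not_isDiag_of_mem_edgeSet
        (SimpleGraph.mem_edgeFinset.mp (Finset.mem_powerset.mp hS he))
    rw [prod_sgnE_eq x S hnd,
        Finset.prod_congr rfl (fun v (_ : v ∈ Finset.univ) =>
          eps_add (sgn_sq (x v)) (par S v) (δ v)),
        Finset.prod_mul_distrib]
    ring
  rw [Finset.sum_congr rfl (fun x (_ : x ∈ Finset.univ) => key x), Finset.sum_comm]
  refine Finset.sum_congr rfl (fun S _ => ?_)
  rw [← Finset.mul_sum, sum_prod_eps]
  have hiff : (∀ v, par S v + δ v = 0) ↔ par S = δ := by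
    constructor
    · intro h; funext v
      have := h v
      have h01 : ∀ a b : ZMod 2, a + b = 0 → a = b := by decide
      exact h01 _ _ this
    · intro h; intro v; rw [h]; exact zmod2_add_self (δ v)
  by_cases h : par S = δ
  · rw [if_pos (hiff.mpr h), if_pos h, div_mul_cancel₀, mul_one]
    exact h2p
  · rw [if_neg (fun hh => h (hiff.mp hh)), if_neg h, mul_zero, mul_zero]

def deltaIJ {p : ℕ} (i j : Fin p) : Fin p → ZMod 2 :=
  fun v => (if v = i then 1 else 0) + (if v = j then 1 else 0)

lemma sum_deltaIJ {p : ℕ} (i j : Fin p) : ∑ v, deltaIJ i j v = 0 := by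
  unfold deltaIJ
  rw [Finset.sum_add_distrib, Finset.sum_ite_eq' Finset.univ i (fun _ => (1 : ZMod 2)),
      Finset.sum_ite_eq' Finset.univ j (fun _ => (1 : ZMod 2))]
  simp [zmod2_add_self]

lemma mem_ite_delta {p : ℕ} (i j v : Fin p) (hij : i ≠ j) :
    (if v ∈ s(i,j) then (1 : ZMod 2) else 0) = deltaIJ i j v := by
  unfold deltaIJ
  rcases eq_or_ne v i with rfl | hvi
  · simp [Sym2.mem_iff, hij]
  · rcases eq_or_ne v j with rfl | hvj
    · simp [Sym2.mem_iff, hvi]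
    · simp [Sym2.mem_iff, hvi, hvj]

lemma par_sum_zero {p : ℕ} (T : SimpleGraph (Fin p)) (S : Finset (Sym2 (Fin p)))
    (hS : S ⊆ T.edgeFinset) : ∑ v, par S v = 0 := by
  unfold par
  rw [Finset.sum_comm]
  refine Finset.sum_eq_zero (fun e he => ?_)
  have hnd : ¬ e.IsDiag := T.not_isDiag_of_mem_edgeSet (SimpleGraph.mem_edgeFinset.mp (hS he))
  induction e using Sym2.ind with
  | _ i j =>
    have hij : i ≠ j := by simpa using hnd
    rw [Finset.sum_congr rfl (fun v _ => mem_ite_delta i j v hij)]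
    exact sum_deltaIJ i j

lemma card_evens {p : ℕ} (hp : 0 < p) :
    (Finset.univ.filter (fun f : Fin p → ZMod 2 => ∑ v, f v = 0)).card = 2^(p-1) := by
  classical
  set v0 : Fin p := ⟨0, hp⟩
  set Ev := Finset.univ.filter (fun f : Fin p → ZMod 2 => ∑ v, f v = 0) with hEv
  set Od := Finset.univ.filter (fun f : Fin p → ZMod 2 => ¬ ∑ v, f v = 0) with hOd
  have hsum : ∀ (f : Fin p → ZMod 2) (a : ZMod 2),
      ∑ v, Function.update f v0 a v = a + ∑ v ∈ Finset.univ.erase v0, f v := by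
    intro f a
    rw [← Finset.sdiff_singleton_eq_erase,
        Finset.sum_update_of_mem (Finset.mem_univ v0)]
  have hsplit : ∀ f : Fin p → ZMod 2,
      ∑ v, f v = f v0 + ∑ v ∈ Finset.univ.erase v0, f v :=
    fun f => (Finset.add_sum_erase Finset.univ f (Finset.mem_univ v0)).symm
  have hflip : ∀ f : Fin p → ZMod 2,
      ∑ v, Function.update f v0 (f v0 + 1) v = (∑ v, f v) + 1 := by
    intro f
    rw [hsum, hsplit f]; ring
  have hcard : Ev.card = Od.card := by
    refine Finset.card_bij' (fun f _ => Function.update f v0 (f v0 + 1))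
      (fun f _ => Function.update f v0 (f v0 + 1)) ?_ ?_ ?_ ?_
    · intro f hf
      rw [hOd, Finset.mem_filter]
      refine ⟨Finset.mem_univ _, ?_⟩
      rw [hflip, (Finset.mem_filter.mp hf).2]
      decide
    · intro f hf
      rw [hEv, Finset.mem_filter]
      refine ⟨Finset.mem_univ _, ?_⟩
      rw [hflip]
      have h1 : ∑ v, f v = 1 := by
        have := (Finset.mem_filter.mp hf).2
        revert this
        generalize (∑ v, f v) = a
        revert a; decide
      rw [h1]; decide
    · intro f _
      funext v
      rcases eq_or_ne v v0 with rfl | hv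
      · simp only [Function.update_self]
        linear_combination (zmod2_add_self 1)
      · simp [Function.update_of_ne hv]
    · intro f _
      funext v
      rcases eq_or_ne v v0 with rfl | hv
      · simp only [Function.update_self]
        linear_combination (zmod2_add_self 1)
      · simp [Function.update_of_ne hv]
  have htot : Ev.card + Od.card = 2^p := by
    rw [hEv, hOd, Finset.card_filter_add_card_filter_not]
    simp [Fintype.card_fun]
  have h2 : 2^p = 2^(p-1) * 2 := by
    rw [← pow_succ]
    congr 1
    omega
  omega

lemma path_par {p : ℕ} (T : SimpleGraph (Fin p)) (hT : T.IsTree) (i j : Fin p)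
    (hij : i ≠ j) :
    ∃ F : Finset (Sym2 (Fin p)), F ⊆ T.edgeFinset ∧ F.card = T.dist i j ∧
      par F = deltaIJ i j := by
  classical
  obtain ⟨w, hw, hl⟩ := hT.isConnected.exists_path_of_dist i j
  refine ⟨w.edges.toFinset, ?_, ?_, ?_⟩
  · intro e he
    exact SimpleGraph.mem_edgeFinset.mpr (w.edges_subset_edgeSet (List.mem_toFinset.mp he))
  · rw [List.toFinset_card_of_nodup hw.isTrail.edges_nodup, SimpleGraph.Walk.length_edges, hl]
  · funext v
    unfold par
    rw [Finset.sum_boole]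
    have hfil : (w.edges.toFinset.filter (fun e => v ∈ e)).card
        = w.edges.countP (fun e => decide (v ∈ e)) := by
      have h0 : Finset.filter (fun e => v ∈ e) w.edges.toFinset
          = (w.edges.filter (fun e => decide (v ∈ e))).toFinset := by
        rw [List.toFinset_filter]
        apply Finset.filter_congr
        intro e _
        simp
      rw [h0, List.toFinset_card_of_nodup (hw.isTrail.edges_nodup.filter _),
          List.countP_eq_length_filter]
    rw [hfil]
    have heven := hw.isTrail.even_countP_edges_iff (x := v)
    set n := w.edges.countP (fun e => decide (v ∈ e)) with hn
    have hcast : (n : ZMod 2) = ((n % 2 : ℕ) : ZMod 2) := (ZMod.natCast_mod n 2).symm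
    by_cases hv : v = i ∨ v = j
    · have hodd : ¬ Even n := by
        rw [heven]
        intro h
        rcases hv with rfl | rfl
        · exact (h hij).1 rfl
        · exact (h hij).2 rfl
      rw [hcast, Nat.not_even_iff.mp hodd]
      unfold deltaIJ
      rcases hv with rfl | rfl
      · rw [if_pos rfl, if_neg hij]; rfl
      · rw [if_neg (Ne.symm hij), if_pos rfl]; rfl
    · push_neg at hv
      have heq : Even n := heven.mpr (fun _ => ⟨hv.1, hv.2⟩)
      rw [hcast, Nat.even_iff.mp heq]
      unfold deltaIJ
      rw [if_neg hv.1, if_neg hv.2]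
      rfl

lemma zmod2_eq_zero_or_one (a : ZMod 2) : a = 0 ∨ a = 1 := by revert a; decide

lemma par_surj {p : ℕ} (T : SimpleGraph (Fin p)) (hT : T.IsTree) :
    ∀ (n : ℕ) (f : Fin p → ZMod 2),
      (Finset.univ.filter (fun v => f v = 1)).card = n → ∑ v, f v = 0 →
      ∃ S ⊆ T.edgeFinset, par S = f := by
  classical
  intro n
  induction n using Nat.strong_induction_on with
  | _ n ih =>
    intro f hcard hsum
    have hfsum : ∑ v, f v = ((Finset.univ.filter (fun v => f v = 1)).card : ZMod 2) := by
      rw [← Finset.sum_boole]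
      refine Finset.sum_congr rfl (fun v _ => ?_)
      rcases zmod2_eq_zero_or_one (f v) with h | h <;> simp [h]
    rcases Nat.eq_zero_or_pos n with rfl | hn
    · refine ⟨∅, Finset.empty_subset _, ?_⟩
      funext v
      have hv : f v = 0 := by
        rcases zmod2_eq_zero_or_one (f v) with h | h
        · exact h
        · exfalso
          have : v ∈ Finset.univ.filter (fun v => f v = 1) := by
            simp [h]
          rw [Finset.card_eq_zero.mp hcard] at this
          simp at this
      rw [hv]
      simp [par]
    · have hne : (Finset.univ.filter (fun v => f v = 1)).Nonempty :=
        Finset.card_pos.mp (hcard ▸ hn)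
      obtain ⟨i, hi⟩ := hne
      have hn2 : 2 ≤ n := by
        rcases Nat.lt_or_ge n 2 with h | h
        · have h1 : n = 1 := by omega
          subst h1
          rw [hsum, hcard] at hfsum
          exfalso
          simp at hfsum
        · exact h
      have hne2 : ((Finset.univ.filter (fun v => f v = 1)).erase i).Nonempty := by
        rw [← Finset.card_pos, Finset.card_erase_of_mem hi, hcard]
        omega
      obtain ⟨j, hj⟩ := hne2
      have hij : i ≠ j := fun h => (Finset.mem_erase.mp hj).1 h.symm
      have hfi : f i = 1 := (Finset.mem_filter.mp hi).2
      have hfj : f j = 1 := (Finset.mem_filter.mp (Finset.mem_erase.mp hj).2).2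
      set g : Fin p → ZMod 2 := fun v => f v + deltaIJ i j v with hg
      have hgv : ∀ v, g v = if v = i ∨ v = j then 0 else f v := by
        intro v
        rw [hg]
        dsimp only
        unfold deltaIJ
        rcases eq_or_ne v i with rfl | hvi
        · rw [if_pos (Or.inl rfl), if_pos rfl, if_neg hij, hfi]
          decide
        · rcases eq_or_ne v j with rfl | hvj
          · rw [if_pos (Or.inr rfl), if_neg hvi, if_pos rfl, hfj]
            decide
          · simp [hvi, hvj]
      have hgsupp : Finset.univ.filter (fun v => g v = 1)
          = ((Finset.univ.filter (fun v => f v = 1)).erase j).erase i := by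
        ext v
        simp only [Finset.mem_filter, Finset.mem_erase, Finset.mem_univ, true_and]
        rw [hgv v]
        by_cases hvi : v = i
        · subst hvi
          simp [hij]
        · by_cases hvj : v = j
          · subst hvj
            simp
          · simp [hvi, hvj]
      have hgcard : (Finset.univ.filter (fun v => g v = 1)).card = n - 2 := by
        rw [hgsupp, Finset.card_erase_of_mem (Finset.mem_erase.mpr ⟨hij, hi⟩),
            Finset.card_erase_of_mem (Finset.mem_erase.mp hj).2, hcard]
        omega
      have hgsum : ∑ v, g v = 0 := by
        rw [hg]
        dsimp only
        rw [Finset.sum_add_distrib, hsum, sum_deltaIJ, add_zero]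
      obtain ⟨S', hS'sub, hS'par⟩ := ih (n - 2) (by omega) g hgcard hgsum
      obtain ⟨F, hFsub, _, hFpar⟩ := path_par T hT i j hij
      refine ⟨S' ∆ F, ?_, ?_⟩
      · intro e he
        have := symmDiff_le_sup (a := S') (b := F)
        have h2 := this he
        rcases Finset.mem_union.mp h2 with h | h
        · exact hS'sub h
        · exact hFsub h
      · funext v
        rw [par_symmDiff, hS'par, hFpar]
        have : g v = f v + deltaIJ i j v := rfl
        rw [this]
        linear_combination (zmod2_add_self (deltaIJ i j v))

lemma par_inj {p : ℕ} (T : SimpleGraph (Fin p)) (hT : T.IsTree)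
    (hE : T.edgeFinset.card + 1 = p) :
    ∀ S ∈ T.edgeFinset.powerset, ∀ S' ∈ T.edgeFinset.powerset,
      par S = par S' → S = S' := by
  classical
  have hp : 0 < p := by omega
  have hcard : T.edgeFinset.powerset.card
      ≤ (Finset.univ.filter (fun f : Fin p → ZMod 2 => ∑ v, f v = 0)).card := by
    rw [Finset.card_powerset, card_evens hp]
    have : T.edgeFinset.card = p - 1 := by omega
    rw [this]
  intro S hS S' hS' hpar
  exact Finset.inj_on_of_surj_on_of_card_le (fun S _ => par S)
    (fun S hS => Finset.mem_filter.mpr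
      ⟨Finset.mem_univ _, par_sum_zero T S (Finset.mem_powerset.mp hS)⟩)
    (fun f hf => by
      obtain ⟨S, hSsub, hSpar⟩ := par_surj T hT _ f rfl (Finset.mem_filter.mp hf).2
      exact ⟨S, Finset.mem_powerset.mpr hSsub, hSpar⟩)
    hcard hS hS' hpar

lemma sum_ind_eval {p : ℕ} (θ : ℝ) (T : SimpleGraph (Fin p)) (hT : T.IsTree)
    (hE : T.edgeFinset.card + 1 = p) (δ : Fin p → ZMod 2)
    (S0 : Finset (Sym2 (Fin p))) (hS0 : S0 ∈ T.edgeFinset.powerset)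
    (hS0par : par S0 = δ) :
    ∑ S ∈ T.edgeFinset.powerset, (1 - 2*θ)^S.card * (if par S = δ then 1 else 0)
      = (1 - 2*θ)^S0.card := by
  rw [Finset.sum_eq_single_of_mem S0 hS0]
  · rw [if_pos hS0par, mul_one]
  · intro S hS hne
    rw [if_neg, mul_zero]
    intro h
    exact hne (par_inj T hT hE S hS S0 hS0 (h.trans hS0par.symm))

lemma prod_eps_delta {p : ℕ} (x : Fin p → Bool) (i j : Fin p) (hij : i ≠ j) :
    ∏ v : Fin p, eps (sgn (x v)) (deltaIJ i j v) = sgn (x i) * sgn (x j) := by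
  rw [← prod_eps_single x i j hij]
  exact Finset.prod_congr rfl (fun v _ => by rw [mem_ite_delta i j v hij])

lemma agree_prob {p : ℕ} (θ : ℝ) (T : SimpleGraph (Fin p)) (hT : T.IsTree)
    (hE : T.edgeFinset.card + 1 = p) (i j : Fin p) (hij : i ≠ j) :
    ∑ x ∈ Finset.univ.filter (fun x : Fin p → Bool => x i = x j), isingP θ T x
      = (1 + (1 - 2*θ) ^ (T.dist i j)) / 2 := by
  classical
  have hZ : ∑ x : Fin p → Bool, isingP θ T x * ∏ v, eps (sgn (x v)) ((fun _ => (0:ZMod 2)) v)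
      = 1 := by
    rw [gsum θ T hE (fun _ => 0),
        sum_ind_eval θ T hT hE (fun _ => 0) ∅ (Finset.empty_mem_powerset _)
          (funext fun v => by simp [par])]
    simp
  have hC : ∑ x : Fin p → Bool, isingP θ T x * ∏ v, eps (sgn (x v)) (deltaIJ i j v)
      = (1 - 2*θ) ^ (T.dist i j) := by
    obtain ⟨F, hFsub, hFcard, hFpar⟩ := path_par T hT i j hij
    rw [gsum θ T hE (deltaIJ i j),
        sum_ind_eval θ T hT hE (deltaIJ i j) F (Finset.mem_powerset.mpr hFsub) hFpar,
        hFcard]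
  rw [Finset.sum_filter]
  have hpt : ∀ x : Fin p → Bool,
      (if x i = x j then isingP θ T x else 0)
        = (isingP θ T x * ∏ v, eps (sgn (x v)) ((fun _ => (0:ZMod 2)) v)) / 2
          + (isingP θ T x * ∏ v, eps (sgn (x v)) (deltaIJ i j v)) / 2 := by
    intro x
    rw [prod_eps_delta x i j hij]
    have h0 : ∏ v : Fin p, eps (sgn (x v)) ((fun _ => (0:ZMod 2)) v) = 1 := by
      simp [eps]
    rw [h0]
    by_cases h : x i = x j
    · rw [if_pos h, h, sgn_sq]; ring
    · rw [if_neg h]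
      have : sgn (x i) * sgn (x j) = -1 := by
        cases hxi : x i <;> cases hxj : x j <;> simp_all [sgn]
      rw [this]; ring
  rw [Finset.sum_congr rfl (fun x _ => hpt x), Finset.sum_add_distrib,
      ← Finset.sum_div, ← Finset.sum_div, hZ, hC]
  ring
end S2A


/-- correlation decay: for distinct `i, j` at graph distance `d` in `T`,
`P(x_i = x_j) = (1 + (1-2θ)^d)/2`; this quantity is strictly decreasing in `d`, so
for every non-edge pair the agreement probability is `< 1 - θ`. -/
theorem stmt2 (p : ℕ) (hp : 2 ≤ p) (θ : ℝ) (hθ0 : 0 < θ) (hθ1 : θ < 1 / 2)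
    (T : SimpleGraph (Fin p)) (hT : T.IsTree) :
    (∀ i j : Fin p, i ≠ j →
      ∑ x ∈ Finset.univ.filter (fun x : Fin p → Bool => x i = x j), isingP θ T x
        = (1 + (1 - 2 * θ) ^ (T.dist i j)) / 2) ∧
    (∀ d₁ d₂ : ℕ, d₁ < d₂ →
      (1 + (1 - 2 * θ) ^ d₂) / 2 < (1 + (1 - 2 * θ) ^ d₁) / 2) ∧
    (∀ i j : Fin p, i ≠ j → ¬ T.Adj i j →
      ∑ x ∈ Finset.univ.filter (fun x : Fin p → Bool => x i = x j), isingP θ T x < 1 - θ) := by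
  classical
  have hθ2 : 0 < 1 - 2 * θ := by linarith
  have hθ3 : 1 - 2 * θ < 1 := by linarith
  have hE : T.edgeFinset.card + 1 = p := by
    have := hT.card_edgeFinset
    rwa [Fintype.card_fin] at this
  refine ⟨fun i j hij => S2A.agree_prob θ T hT hE i j hij, ?_, ?_⟩
  · intro d₁ d₂ h
    have := pow_lt_pow_right_of_lt_one₀ hθ2 hθ3 h
    linarith
  · intro i j hij hadj
    rw [S2A.agree_prob θ T hT hE i j hij]
    have hd1 : T.dist i j ≠ 1 := fun h => hadj (SimpleGraph.dist_eq_one_iff_adj.mp h)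
    have hd0 : 0 < T.dist i j := hT.isConnected.pos_dist_of_ne hij
    have hd : 1 < T.dist i j := by omega
    have hlt := pow_lt_pow_right_of_lt_one₀ hθ2 hθ3 hd
    rw [pow_one] at hlt
    linarith
end

section
/- Let p ≥ 2 and θ ∈ (0, 1/2). The map T ↦ P_{T,θ} from trees on {1,…,p} to probability distributions on {0,1}^p is injective: if T and T' are trees on {1,…,p} with E(T) ≠ E(T'), then P_{T,θ} ≠ P_{T',θ}. -/
open scoped Classical BigOperators
open Filter

noncomputable section

def disag {p : ℕ} (x : Fin p → Bool) : Sym2 (Fin p) → Prop :=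
  Sym2.lift ⟨fun a b => x a ≠ x b, fun a b => propext ne_comm⟩

lemma pairWeight_eq_ite (θ : ℝ) {p : ℕ} (x : Fin p → Bool) (e : Sym2 (Fin p)) :
    pairWeight θ x e = if disag x e then θ else 1 - θ := by
  induction e using Sym2.ind with
  | _ a b =>
    simp only [pairWeight, disag, Sym2.lift_mk]
    by_cases h : x a = x b <;> simp [h]

def cutCard {p : ℕ} (x : Fin p → Bool) (T : SimpleGraph (Fin p)) : ℕ :=
  (T.edgeFinset.filter (disag x)).card

lemma prod_pairWeight (θ : ℝ) {p : ℕ} (x : Fin p → Bool) (T : SimpleGraph (Fin p)) :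
    ∏ e ∈ T.edgeFinset, pairWeight θ x e
      = θ ^ cutCard x T * (1 - θ) ^ (T.edgeFinset.card - cutCard x T) := by
  rw [← Finset.prod_filter_mul_prod_filter_not T.edgeFinset (disag x)]
  have h1 : ∏ e ∈ T.edgeFinset.filter (disag x), pairWeight θ x e = θ ^ cutCard x T := by
    rw [Finset.prod_congr rfl (fun e he => ?_), Finset.prod_const, cutCard]
    rw [pairWeight_eq_ite, if_pos (Finset.mem_filter.mp he).2]
  have h2 : ∏ e ∈ T.edgeFinset.filter (fun e => ¬ disag x e), pairWeight θ x e
      = (1 - θ) ^ (T.edgeFinset.card - cutCard x T) := by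
    rw [Finset.prod_congr rfl (fun e he => ?_), Finset.prod_const]
    · congr 1
      have := Finset.card_filter_add_card_filter_not (s := T.edgeFinset) (p := disag x)
      rw [cutCard]; omega
    · rw [pairWeight_eq_ite, if_neg (Finset.mem_filter.mp he).2]
  rw [h1, h2]

lemma cut_eq_of_prod_eq {θ : ℝ} (h0 : 0 < θ) (h1 : θ < 1/2) {m c c' : ℕ}
    (hc : c ≤ m) (hc' : c' ≤ m)
    (h : θ ^ c * (1 - θ) ^ (m - c) = θ ^ c' * (1 - θ) ^ (m - c')) : c = c' := by
  have hlt : θ < 1 - θ := by linarith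
  have key : ∀ a b : ℕ, a ≤ b → b ≤ m →
      θ ^ a * (1 - θ) ^ (m - a) = θ ^ b * (1 - θ) ^ (m - b) → a = b := by
    intro a b hab hbm heq
    by_contra hne
    have hlt' : a < b := lt_of_le_of_ne hab hne
    set n := b - a with hn
    have h1θ : (0:ℝ) < 1 - θ := by linarith
    have hb : b = a + n := by omega
    rw [hb] at heq
    have hma : m - a = (m - (a + n)) + n := by omega
    rw [hma, pow_add, pow_add] at heq
    have hpos : (0:ℝ) < θ ^ a * (1 - θ) ^ (m - (a + n)) :=
      mul_pos (pow_pos h0 a) (pow_pos h1θ _)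
    have keq : (1 - θ) ^ n = θ ^ n := by
      apply mul_left_cancel₀ (ne_of_gt hpos)
      linear_combination heq
    have : θ ^ n < (1 - θ) ^ n := by
      apply pow_lt_pow_left₀ hlt h0.le
      omega
    linarith
  rcases le_total c c' with hle | hle
  · exact key c c' hle hc' h
  · exact (key c' c hle hc h.symm).symm


lemma filter_single {p : ℕ} (T : SimpleGraph (Fin p)) (i : Fin p) :
    T.edgeFinset.filter (disag (fun k => decide (k = i)))
      = T.edgeFinset.filter (fun e => i ∈ e) := by
  apply Finset.filter_congr
  intro e he
  rw [SimpleGraph.mem_edgeFinset] at he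
  induction e using Sym2.ind with
  | _ a b =>
    have hab : a ≠ b := T.ne_of_adj he
    simp only [disag, Sym2.lift_mk, ne_eq, decide_eq_decide, Sym2.mem_iff]
    by_cases h1 : a = i <;> by_cases h2 : b = i <;> simp_all [eq_comm]

lemma filter_pair {p : ℕ} (T : SimpleGraph (Fin p)) {i j : Fin p} (hij : i ≠ j) :
    T.edgeFinset.filter (disag (fun k => decide (k = i ∨ k = j)))
      = (T.edgeFinset.filter (fun e => i ∈ e) ∪ T.edgeFinset.filter (fun e => j ∈ e))
        \ (T.edgeFinset.filter (fun e => i ∈ e ∧ j ∈ e)) := by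
  ext e
  induction e using Sym2.ind with
  | _ a b =>
    simp only [Finset.mem_sdiff, Finset.mem_union, Finset.mem_filter]
    by_cases he : s(a, b) ∈ T.edgeFinset
    · have hab : a ≠ b := T.ne_of_adj (by simpa using he)
      simp only [he, true_and, not_true_eq_false, false_and, disag, Sym2.lift_mk, ne_eq,
        decide_eq_decide, Sym2.mem_iff]
      by_cases h1 : a = i <;> by_cases h2 : a = j <;> by_cases h3 : b = i <;>
        by_cases h4 : b = j <;> simp_all <;> tauto
    · simp [he]

lemma card_identity {p : ℕ} (T : SimpleGraph (Fin p)) {i j : Fin p} (hij : i ≠ j) :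
    cutCard (fun k => decide (k = i ∨ k = j)) T
      + 2 * (T.edgeFinset.filter (fun e => i ∈ e ∧ j ∈ e)).card
    = (T.edgeFinset.filter (fun e => i ∈ e)).card
      + (T.edgeFinset.filter (fun e => j ∈ e)).card := by
  set A := T.edgeFinset.filter (fun e => i ∈ e) with hA
  set B := T.edgeFinset.filter (fun e => j ∈ e) with hB
  set I := T.edgeFinset.filter (fun e => i ∈ e ∧ j ∈ e) with hIdef
  have hI : I = A ∩ B := by
    ext e
    simp only [hIdef, hA, hB, Finset.mem_inter, Finset.mem_filter]
    tauto
  have hsub : I ⊆ A ∪ B := by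
    rw [hI]
    exact Finset.inter_subset_left.trans Finset.subset_union_left
  have hcard : (A ∪ B).card + (A ∩ B).card = A.card + B.card :=
    Finset.card_union_add_card_inter A B
  have hle : I.card ≤ (A ∪ B).card := Finset.card_le_card hsub
  rw [← hI] at hcard
  rw [cutCard, filter_pair T hij, Finset.card_sdiff_of_subset hsub]
  omega

end

/-- the map `T ↦ P_{T,θ}` is injective on trees. -/
theorem stmt3 (p : ℕ) (hp : 2 ≤ p) (θ : ℝ) (hθ0 : 0 < θ) (hθ1 : θ < 1 / 2)
    (T T' : SimpleGraph (Fin p)) (hT : T.IsTree) (hT' : T'.IsTree)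
    (hne : T.edgeSet ≠ T'.edgeSet) :
    isingP θ T ≠ isingP θ T' := by
  intro hEq
  apply hne
  have hm : T.edgeFinset.card = T'.edgeFinset.card := by
    have h1 := hT.card_edgeFinset
    have h2 := hT'.card_edgeFinset
    omega
  have hcut : ∀ x : Fin p → Bool, cutCard x T = cutCard x T' := by
    intro x
    have h := congrFun hEq x
    rw [isingP, isingP] at h
    have h2 : ∏ e ∈ T.edgeFinset, pairWeight θ x e
        = ∏ e ∈ T'.edgeFinset, pairWeight θ x e := by
      have : (1:ℝ)/2 ≠ 0 := by norm_num
      exact mul_left_cancel₀ this h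
    rw [prod_pairWeight, prod_pairWeight, ← hm] at h2
    exact cut_eq_of_prod_eq hθ0 hθ1 (Finset.card_filter_le _ _)
      (by rw [hm]; exact Finset.card_filter_le _ _) h2
  have hA : ∀ i : Fin p, (T.edgeFinset.filter (fun e => i ∈ e)).card
      = (T'.edgeFinset.filter (fun e => i ∈ e)).card := by
    intro i
    have h := hcut (fun k => decide (k = i))
    rwa [cutCard, cutCard, filter_single, filter_single] at h
  have hI : ∀ i j : Fin p, i ≠ j →
      (T.edgeFinset.filter (fun e => i ∈ e ∧ j ∈ e)).card
        = (T'.edgeFinset.filter (fun e => i ∈ e ∧ j ∈ e)).card := by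
    intro i j hij
    have h1 := card_identity T hij
    have h2 := card_identity T' hij
    have h3 := hcut (fun k => decide (k = i ∨ k = j))
    have h4 := hA i
    have h5 := hA j
    omega
  have hAdj : ∀ i j : Fin p, T.Adj i j ↔ T'.Adj i j := by
    intro i j
    by_cases hij : i = j
    · subst hij; simp
    · have key : ∀ G : SimpleGraph (Fin p), G.Adj i j ↔
          0 < (G.edgeFinset.filter (fun e => i ∈ e ∧ j ∈ e)).card := by
        intro G
        rw [Finset.card_pos]
        constructor
        · intro h
          exact ⟨s(i,j), Finset.mem_filter.mpr ⟨SimpleGraph.mem_edgeFinset.mpr h, by simp⟩⟩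
        · rintro ⟨e, he⟩
          rw [Finset.mem_filter] at he
          obtain ⟨he1, hi2, hj2⟩ := he
          have heq : e = s(i,j) := (Sym2.mem_and_mem_iff hij).mp ⟨hi2, hj2⟩
          rw [heq, SimpleGraph.mem_edgeFinset] at he1
          exact he1
      rw [key T, key T', hI i j hij]
  have : T = T' := SimpleGraph.ext (funext fun i => funext fun j => propext (hAdj i j))
  rw [this]
end

section
/- Let θ₁, θ₃ ∈ (0, 1/2) and let P̃ be the probability distribution on {0,1}³ defined by P̃(x₁,x₂,x₃) = (1/2)·w₁(x₁,x₂)·w₃(x₂,x₃), where wₛ(a,b) = 1−θₛ if a = b and θₛ if a ≠ b. Let x_1,…,x_n be i.i.d. samples from P̃ (probabilities taken under the n-fold product measure P̃^{⊗n}). Then lim_{n→∞} −(1/n)·log ℙ(Â_{1,3} ≥ Â_{1,2}) = −log(1 − θ₃·(1 − √(4θ₁(1−θ₁)))). -/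
open scoped Classical BigOperators
open Filter

/-- The inhomogeneous 3-node chain distribution `P̃`. -/
noncomputable def Ptilde (θ₁ θ₃ : ℝ) (x : Fin 3 → Bool) : ℝ :=
  (1 / 2) * (if x 0 = x 1 then 1 - θ₁ else θ₁) * (if x 1 = x 2 then 1 - θ₃ else θ₃)

namespace Stmt4
noncomputable def rr (θ₁ : ℝ) : ℝ := Real.sqrt ((1 - θ₁) / θ₁)
noncomputable def rho (θ₁ θ₃ : ℝ) : ℝ := 1 - θ₃ * (1 - Real.sqrt (4 * θ₁ * (1 - θ₁)))
def tau (x : Fin 3 → Bool) : Fin 3 → Bool := ![x 0, x 2, x 1]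
noncomputable def phi (θ₁ : ℝ) (x : Fin 3 → Bool) : ℝ :=
  (if x 0 = x 2 then rr θ₁ else 1) * (if x 0 = x 1 then (rr θ₁)⁻¹ else 1)
noncomputable def psi (θ₁ : ℝ) (x : Fin 3 → Bool) : ℝ :=
  (if x 0 = x 2 then (rr θ₁)⁻¹ else 1) * (if x 0 = x 1 then rr θ₁ else 1)
noncomputable def Qd (θ₁ θ₃ : ℝ) (x : Fin 3 → Bool) : ℝ :=
  Ptilde θ₁ θ₃ x * phi θ₁ x / rho θ₁ θ₃
noncomputable def zR (x : Fin 3 → Bool) : ℝ :=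
  (if x 0 = x 2 then (1:ℝ) else 0) - (if x 0 = x 1 then (1:ℝ) else 0)

/- counting abbreviations -/
def c01 {n : ℕ} (xs : Fin n → Fin 3 → Bool) : ℕ :=
  (Finset.univ.filter (fun k : Fin n => xs k 0 = xs k 1)).card
def c02 {n : ℕ} (xs : Fin n → Fin 3 → Bool) : ℕ :=
  (Finset.univ.filter (fun k : Fin n => xs k 0 = xs k 2)).card

section basics
variable {θ₁ θ₃ : ℝ} (h10 : 0 < θ₁) (h11 : θ₁ < 1/2) (h30 : 0 < θ₃) (h31 : θ₃ < 1/2)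

include h10 h11 in
lemma rr_pos : 0 < rr θ₁ := Real.sqrt_pos.2 (by apply div_pos <;> nlinarith)

include h10 h11 in
lemma rr_one_le : 1 ≤ rr θ₁ := Real.one_le_sqrt.2 (by rw [le_div_iff₀ h10]; nlinarith)

include h10 h11 h30 h31 in
lemma rho_ge : 1/2 ≤ rho θ₁ θ₃ := by
  have h1 : Real.sqrt (4 * θ₁ * (1 - θ₁)) ≤ 1 := Real.sqrt_le_one.2 (by nlinarith)
  have h0 : 0 ≤ Real.sqrt (4 * θ₁ * (1 - θ₁)) := Real.sqrt_nonneg _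
  rw [rho]; nlinarith

include h10 h11 h30 h31 in
lemma rho_pos : 0 < rho θ₁ θ₃ := lt_of_lt_of_le (by norm_num) (rho_ge h10 h11 h30 h31)

lemma Ptilde_nonneg (hA : 0 < θ₁) (hB : θ₁ < 1) (hC : 0 < θ₃) (hD : θ₃ < 1)
    (x : Fin 3 → Bool) : 0 ≤ Ptilde θ₁ θ₃ x := by
  unfold Ptilde; split_ifs <;> nlinarith

include h10 h11 in
lemma phi_nonneg (x : Fin 3 → Bool) : 0 ≤ phi θ₁ x := by
  have := rr_pos (θ₁ := θ₁) h10 h11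
  unfold phi; split_ifs <;> positivity

include h10 h11 h30 h31 in
lemma Qd_nonneg (x : Fin 3 → Bool) : 0 ≤ Qd θ₁ θ₃ x := by
  apply div_nonneg _ (rho_pos h10 h11 h30 h31).le
  exact mul_nonneg (Ptilde_nonneg h10 (by linarith) h30 (by linarith) x) (phi_nonneg h10 h11 x)

lemma tau_invol : Function.Involutive tau := by
  intro x; funext i; fin_cases i <;> rfl

lemma zR_tau (x : Fin 3 → Bool) : zR (tau x) = - zR x := by
  unfold zR
  have h0 : tau x 0 = x 0 := rfl
  have h1 : tau x 1 = x 2 := rfl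
  have h2 : tau x 2 = x 1 := rfl
  rw [h0, h1, h2]; ring

lemma zR_sq_le_one (x : Fin 3 → Bool) : zR x ^ 2 ≤ 1 := by
  unfold zR; split_ifs <;> norm_num

omit h10 h11 h30 h31 in
lemma hs1 (h10 : 0 < θ₁) : θ₁ * rr θ₁ = Real.sqrt (θ₁ * (1 - θ₁)) := by
  have h : θ₁ = Real.sqrt (θ₁ ^ 2) := by rw [Real.sqrt_sq h10.le]
  rw [rr]
  nth_rewrite 1 [h]
  rw [← Real.sqrt_mul (by positivity)]
  congr 1; field_simp

omit h10 h11 h30 h31 in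
lemma hs2 (h10 : 0 < θ₁) (h11 : θ₁ < 1/2) :
    (1 - θ₁) * (rr θ₁)⁻¹ = Real.sqrt (θ₁ * (1 - θ₁)) := by
  have h1 : (0:ℝ) < 1 - θ₁ := by linarith
  have h : 1 - θ₁ = Real.sqrt ((1 - θ₁) ^ 2) := by rw [Real.sqrt_sq h1.le]
  rw [rr, ← Real.sqrt_inv]
  nth_rewrite 1 [h]
  rw [← Real.sqrt_mul (by positivity)]
  congr 1; field_simp

omit h10 h11 h30 h31 in
lemma hs3 : Real.sqrt (4 * θ₁ * (1 - θ₁)) = 2 * Real.sqrt (θ₁ * (1 - θ₁)) := by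
  have h : 4 * θ₁ * (1 - θ₁) = 2 ^ 2 * (θ₁ * (1 - θ₁)) := by ring
  rw [h, Real.sqrt_mul (by positivity), Real.sqrt_sq (by norm_num)]

def e3 : (Fin 3 → Bool) ≃ Bool × Bool × Bool where
  toFun x := (x 0, x 1, x 2)
  invFun p := ![p.1, p.2.1, p.2.2]
  left_inv x := by funext i; fin_cases i <;> rfl
  right_inv p := rfl

include h10 h11 in
lemma key_sum : ∑ x : Fin 3 → Bool, Ptilde θ₁ θ₃ x * phi θ₁ x = rho θ₁ θ₃ := by
  have hrpos : 0 < rr θ₁ := rr_pos h10 h11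
  have hrinv : rr θ₁ * (rr θ₁)⁻¹ = 1 := mul_inv_cancel₀ hrpos.ne'
  have h1 := hs1 (θ₁ := θ₁) h10
  have h2 := hs2 (θ₁ := θ₁) h10 h11
  have h3 := hs3 (θ₁ := θ₁)
  rw [← Equiv.sum_comp e3.symm]
  rw [Fintype.sum_prod_type]
  have he3 : ∀ p, e3.symm p = ![p.1, p.2.1, p.2.2] := fun p => rfl
  simp only [Fintype.sum_prod_type, Fintype.sum_bool, he3,
    Ptilde, phi, Matrix.cons_val_zero, Matrix.cons_val_one, Matrix.head_cons,
    Matrix.cons_val_two, Matrix.tail_cons]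
  norm_num
  rw [rho]
  linear_combination (1 - θ₁) * (1 - θ₃) * hrinv + θ₃ * h1 + θ₃ * h2 - θ₃ * h3

include h10 h11 h30 h31 in
lemma Qd_sum : ∑ x : Fin 3 → Bool, Qd θ₁ θ₃ x = 1 := by
  unfold Qd
  rw [← Finset.sum_div, key_sum h10 h11, div_self (rho_pos h10 h11 h30 h31).ne']

include h10 h11 in
lemma Qd_tau (x : Fin 3 → Bool) : Qd θ₁ θ₃ (tau x) = Qd θ₁ θ₃ x := by
  have hrpos : 0 < rr θ₁ := rr_pos h10 h11
  have hr2 : θ₁ * (rr θ₁ * rr θ₁) = 1 - θ₁ := by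
    rw [rr, Real.mul_self_sqrt (by apply div_nonneg <;> nlinarith)]; field_simp
  have hne := hrpos.ne'
  unfold Qd
  congr 1
  cases h0 : x 0 <;> cases h1 : x 1 <;> cases h2 : x 2 <;>
    simp [tau, Ptilde, phi, h0, h1, h2] <;>
    field_simp <;>
    first
      | linear_combination (2*θ₃) * hr2
      | linear_combination (-2*θ₃) * hr2
      | linear_combination (-θ₃) * hr2
      | linear_combination θ₃ * hr2

include h10 h11 in
lemma EZ1 : ∑ x : Fin 3 → Bool, Qd θ₁ θ₃ x * zR x = 0 := by
  have hsymm : ∑ x : Fin 3 → Bool, Qd θ₁ θ₃ (tau x) * zR (tau x)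
      = ∑ x : Fin 3 → Bool, Qd θ₁ θ₃ x * zR x :=
    Fintype.sum_bijective tau tau_invol.bijective _ _ (fun x => rfl)
  have h2 : ∀ x : Fin 3 → Bool, Qd θ₁ θ₃ (tau x) * zR (tau x) = - (Qd θ₁ θ₃ x * zR x) := by
    intro x; rw [Qd_tau h10 h11, zR_tau]; ring
  rw [Finset.sum_congr rfl (fun x _ => h2 x), Finset.sum_neg_distrib] at hsymm
  linarith

include h10 h11 h30 h31 in
lemma EZ2 : ∑ x : Fin 3 → Bool, Qd θ₁ θ₃ x * zR x ^ 2 ≤ 1 := by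
  calc ∑ x : Fin 3 → Bool, Qd θ₁ θ₃ x * zR x ^ 2
      ≤ ∑ x : Fin 3 → Bool, Qd θ₁ θ₃ x := by
        apply Finset.sum_le_sum
        intro x _
        have h := Qd_nonneg h10 h11 h30 h31 x
        nlinarith [zR_sq_le_one x, sq_nonneg (zR x)]
    _ = 1 := Qd_sum h10 h11 h30 h31

include h10 h11 h30 h31 in
lemma Ptilde_decomp (x : Fin 3 → Bool) :
    Ptilde θ₁ θ₃ x = rho θ₁ θ₃ * Qd θ₁ θ₃ x * psi θ₁ x := by
  have hrpos : 0 < rr θ₁ := rr_pos h10 h11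
  have hps : phi θ₁ x * psi θ₁ x = 1 := by
    unfold phi psi; split_ifs <;> field_simp
  have hrho := (rho_pos h10 h11 h30 h31).ne'
  rw [Qd]
  field_simp
  first
    | linear_combination (rho θ₁ θ₃ * Ptilde θ₁ θ₃ x) * hps
    | linear_combination (-(rho θ₁ θ₃) * Ptilde θ₁ θ₃ x) * hps
    | linear_combination (Ptilde θ₁ θ₃ x) * hps
    | linear_combination (-(Ptilde θ₁ θ₃ x)) * hps

end basics


lemma sum_prod {C : Type*} [Fintype C] :
    ∀ (n : ℕ) (f : Fin n → C → ℝ),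
      ∑ σ : Fin n → C, ∏ k, f k (σ k) = ∏ k, ∑ x, f k x := by
  intro n
  induction n with
  | zero => intro f; simp
  | succ n ih =>
    intro f
    rw [← Equiv.sum_comp (Fin.consEquiv (fun _ => C))]
    rw [Fintype.sum_prod_type]
    have : ∀ (x : C) (σ : Fin n → C),
        ∏ k, f k ((Fin.consEquiv (fun _ => C)) (x, σ) k)
          = f 0 x * ∏ k : Fin n, f k.succ (σ k) := by
      intro x σ
      rw [Fin.prod_univ_succ]
      simp [Fin.consEquiv]
    simp_rw [this, ← Finset.mul_sum, ← Finset.sum_mul]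
    rw [ih (fun k => f k.succ), Fin.prod_univ_succ]

lemma sum_prod_const {C : Type*} [Fintype C] (n : ℕ) (f : C → ℝ) :
    ∑ σ : Fin n → C, ∏ k, f (σ k) = (∑ x, f x) ^ n := by
  rw [sum_prod n (fun _ => f)]; simp

/-- second moment computation -/
lemma second_moment {C : Type*} [Fintype C] (n : ℕ) (Q : C → ℝ) (z : C → ℝ)
    (hQ1 : ∑ x, Q x = 1) (hz1 : ∑ x, Q x * z x = 0) (hz2 : ∑ x, Q x * z x ^ 2 ≤ 1) :
    ∑ σ : Fin n → C, (∏ k, Q (σ k)) * (∑ k, z (σ k)) ^ 2 ≤ n := by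
  have expand : ∀ σ : Fin n → C,
      (∏ k, Q (σ k)) * (∑ k, z (σ k)) ^ 2
        = ∑ k, ∑ l, (∏ j, Q (σ j)) * (z (σ k) * z (σ l)) := by
    intro σ
    rw [sq, Finset.sum_mul_sum, Finset.mul_sum]
    congr 1; funext k
    rw [Finset.mul_sum]
  simp_rw [expand]
  rw [Finset.sum_comm]
  have inner : ∀ k : Fin n, ∑ σ : Fin n → C, ∑ l, (∏ j, Q (σ j)) * (z (σ k) * z (σ l))
      = ∑ l, ∑ σ : Fin n → C, (∏ j, Q (σ j)) * (z (σ k) * z (σ l)) :=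
    fun k => Finset.sum_comm
  simp_rw [inner]
  have hterm : ∀ k l : Fin n,
      (∑ σ : Fin n → C, (∏ j, Q (σ j)) * (z (σ k) * z (σ l)))
        = if k = l then ∑ x, Q x * z x ^ 2 else 0 := by
    intro k l
    by_cases hkl : k = l
    · subst hkl
      rw [if_pos rfl]
      have : ∀ σ : Fin n → C, (∏ j, Q (σ j)) * (z (σ k) * z (σ k))
          = ∏ j, (fun j x => Q x * (if j = k then z x ^ 2 else 1)) j (σ j) := by
        intro σ
        rw [Finset.prod_mul_distrib, Finset.prod_ite_eq' Finset.univ k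
          (fun j => z (σ j) ^ 2)]
        simp [sq]
      simp_rw [this]
      rw [sum_prod n (fun j x => Q x * if j = k then z x ^ 2 else 1)]
      have : ∀ j : Fin n, (∑ x, Q x * (if j = k then z x ^ 2 else 1))
          = if j = k then (∑ x, Q x * z x ^ 2) else 1 := by
        intro j; by_cases hj : j = k
        · simp [hj]
        · simp [hj, hQ1]
      simp_rw [this]
      rw [Finset.prod_ite_eq' Finset.univ k (fun _ => ∑ x, Q x * z x ^ 2)]
      simp
    · rw [if_neg hkl]
      have : ∀ σ : Fin n → C, (∏ j, Q (σ j)) * (z (σ k) * z (σ l))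
          = ∏ j, (fun j x => Q x * ((if j = k then z x else 1) * (if j = l then z x else 1))) j (σ j) := by
        intro σ
        simp_rw [Finset.prod_mul_distrib]
        rw [Finset.prod_ite_eq' Finset.univ k (fun j => z (σ j)),
            Finset.prod_ite_eq' Finset.univ l (fun j => z (σ j))]
        simp
      simp_rw [this]
      rw [sum_prod n (fun j x => Q x * ((if j = k then z x else 1) * (if j = l then z x else 1)))]
      apply Finset.prod_eq_zero (Finset.mem_univ k)
      simp only [if_pos rfl, if_neg hkl]
      simp_rw [mul_one]
      exact hz1
  simp_rw [hterm]
  simp only [Finset.sum_ite_eq, Finset.mem_univ, if_true]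
  calc ∑ _k : Fin n, ∑ x, Q x * z x ^ 2 ≤ ∑ _k : Fin n, (1:ℝ) :=
        Finset.sum_le_sum (fun _ _ => hz2)
    _ = n := by simp


section counts
variable {θ₁ θ₃ : ℝ} (h10 : 0 < θ₁) (h11 : θ₁ < 1/2) (h30 : 0 < θ₃) (h31 : θ₃ < 1/2)

omit h10 h11 h30 h31 in
lemma prod_psi {n : ℕ} (xs : Fin n → Fin 3 → Bool) :
    ∏ k, psi θ₁ (xs k) = ((rr θ₁)⁻¹) ^ c02 xs * (rr θ₁) ^ c01 xs := by
  unfold psi c01 c02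
  rw [Finset.prod_mul_distrib]
  congr 1
  · rw [Finset.prod_ite (fun _ => (rr θ₁)⁻¹) (fun _ => (1:ℝ)), Finset.prod_const,
      Finset.prod_const, one_pow, mul_one]
  · rw [Finset.prod_ite (fun _ => rr θ₁) (fun _ => (1:ℝ)), Finset.prod_const,
      Finset.prod_const, one_pow, mul_one]

include h10 h11 h30 h31 in
lemma prod_decomp {n : ℕ} (xs : Fin n → Fin 3 → Bool) :
    ∏ k, Ptilde θ₁ θ₃ (xs k)
      = rho θ₁ θ₃ ^ n * (∏ k, Qd θ₁ θ₃ (xs k))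
        * (((rr θ₁)⁻¹) ^ c02 xs * (rr θ₁) ^ c01 xs) := by
  calc ∏ k, Ptilde θ₁ θ₃ (xs k)
      = ∏ k, (rho θ₁ θ₃ * Qd θ₁ θ₃ (xs k) * psi θ₁ (xs k)) :=
        Finset.prod_congr rfl (fun k _ => Ptilde_decomp h10 h11 h30 h31 (xs k))
    _ = (∏ _k : Fin n, rho θ₁ θ₃) * (∏ k, Qd θ₁ θ₃ (xs k)) * (∏ k, psi θ₁ (xs k)) := by
        rw [Finset.prod_mul_distrib, Finset.prod_mul_distrib]
    _ = rho θ₁ θ₃ ^ n * (∏ k, Qd θ₁ θ₃ (xs k)) * (((rr θ₁)⁻¹) ^ c02 xs * (rr θ₁) ^ c01 xs) := by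
        rw [Finset.prod_const, Finset.card_univ, Fintype.card_fin, prod_psi]

omit h10 h11 h30 h31 in
lemma sum_zR {n : ℕ} (xs : Fin n → Fin 3 → Bool) :
    ∑ k, zR (xs k) = (c02 xs : ℝ) - (c01 xs : ℝ) := by
  unfold zR c01 c02
  rw [Finset.sum_sub_distrib, Finset.sum_boole, Finset.sum_boole]

include h10 h11 h30 h31 in
lemma W_nonneg {n : ℕ} (xs : Fin n → Fin 3 → Bool) :
    0 ≤ ∏ k, Qd θ₁ θ₃ (xs k) :=
  Finset.prod_nonneg (fun k _ => Qd_nonneg h10 h11 h30 h31 (xs k))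

include h10 h11 h30 h31 in
lemma W_sum (n : ℕ) : ∑ xs : Fin n → Fin 3 → Bool, ∏ k, Qd θ₁ θ₃ (xs k) = 1 := by
  rw [sum_prod_const, Qd_sum h10 h11 h30 h31, one_pow]

end counts

section bounds
variable {θ₁ θ₃ : ℝ} (h10 : 0 < θ₁) (h11 : θ₁ < 1/2) (h30 : 0 < θ₃) (h31 : θ₃ < 1/2)

omit h10 h11 h30 h31 in
lemma event_iff {n : ℕ} (hn : 0 < n) (xs : Fin n → Fin 3 → Bool) :
    (Ahat xs 0 1 ≤ Ahat xs 0 2) ↔ c01 xs ≤ c02 xs := by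
  have hn' : (0:ℝ) < n := Nat.cast_pos.2 hn
  rw [Ahat, Ahat, div_le_div_iff₀ hn' hn', mul_le_mul_iff_of_pos_right hn', Nat.cast_le]
  exact Iff.rfl

include h10 h11 h30 h31 in
lemma upper {n : ℕ} (hn : 0 < n) :
    iidProb (Ptilde θ₁ θ₃) n {xs | Ahat xs 0 1 ≤ Ahat xs 0 2} ≤ rho θ₁ θ₃ ^ n := by
  have hrpos := rr_pos h10 h11
  have hr1 := rr_one_le h10 h11
  have hrhopos := rho_pos h10 h11 h30 h31
  rw [iidProb]
  have step : ∀ xs : Fin n → Fin 3 → Bool,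
      (if xs ∈ {xs : Fin n → Fin 3 → Bool | Ahat xs 0 1 ≤ Ahat xs 0 2}
        then ∏ k, Ptilde θ₁ θ₃ (xs k) else 0)
        ≤ rho θ₁ θ₃ ^ n * ∏ k, Qd θ₁ θ₃ (xs k) := by
    intro xs
    by_cases hxs : xs ∈ {xs : Fin n → Fin 3 → Bool | Ahat xs 0 1 ≤ Ahat xs 0 2}
    · rw [if_pos hxs]
      have hc : c01 xs ≤ c02 xs := (event_iff hn xs).1 hxs
      rw [prod_decomp h10 h11 h30 h31]
      have ht : (rr θ₁)⁻¹ ^ c02 xs * rr θ₁ ^ c01 xs ≤ 1 := by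
        have h1 : rr θ₁ ^ c01 xs ≤ rr θ₁ ^ c02 xs := pow_le_pow_right₀ hr1 hc
        calc (rr θ₁)⁻¹ ^ c02 xs * rr θ₁ ^ c01 xs
            ≤ (rr θ₁)⁻¹ ^ c02 xs * rr θ₁ ^ c02 xs := by
              apply mul_le_mul_of_nonneg_left h1 (by positivity)
          _ = 1 := by
              rw [inv_pow]
              exact inv_mul_cancel₀ (pow_pos hrpos _).ne'
      have hbase : 0 ≤ rho θ₁ θ₃ ^ n * ∏ k, Qd θ₁ θ₃ (xs k) :=
        mul_nonneg (pow_nonneg hrhopos.le n) (W_nonneg h10 h11 h30 h31 xs)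
      calc rho θ₁ θ₃ ^ n * (∏ k, Qd θ₁ θ₃ (xs k)) * ((rr θ₁)⁻¹ ^ c02 xs * rr θ₁ ^ c01 xs)
          ≤ rho θ₁ θ₃ ^ n * (∏ k, Qd θ₁ θ₃ (xs k)) * 1 :=
            mul_le_mul_of_nonneg_left ht hbase
        _ = rho θ₁ θ₃ ^ n * ∏ k, Qd θ₁ θ₃ (xs k) := by rw [mul_one]
    · rw [if_neg hxs]
      exact mul_nonneg (pow_nonneg hrhopos.le n) (W_nonneg h10 h11 h30 h31 xs)
  calc (∑ xs : Fin n → Fin 3 → Bool,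
        if xs ∈ {xs : Fin n → Fin 3 → Bool | Ahat xs 0 1 ≤ Ahat xs 0 2}
          then ∏ k, Ptilde θ₁ θ₃ (xs k) else 0)
      ≤ ∑ xs : Fin n → Fin 3 → Bool, rho θ₁ θ₃ ^ n * ∏ k, Qd θ₁ θ₃ (xs k) :=
        Finset.sum_le_sum (fun xs _ => step xs)
    _ = rho θ₁ θ₃ ^ n := by
        rw [← Finset.mul_sum, W_sum h10 h11 h30 h31, mul_one]

end bounds

section lowerb
variable {θ₁ θ₃ : ℝ} (h10 : 0 < θ₁) (h11 : θ₁ < 1/2) (h30 : 0 < θ₃) (h31 : θ₃ < 1/2)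

include h10 h11 h30 h31 in
lemma lower {n : ℕ} (hn : 0 < n) :
    rho θ₁ θ₃ ^ n * (rr θ₁ ^ (2 * Nat.sqrt n + 2))⁻¹ * (1/4)
      ≤ iidProb (Ptilde θ₁ θ₃) n {xs | Ahat xs 0 1 ≤ Ahat xs 0 2} := by
  have hrpos := rr_pos h10 h11
  have hr1 := rr_one_le h10 h11
  have hrhopos := rho_pos h10 h11 h30 h31
  set L : ℕ := 2 * Nat.sqrt n + 2 with hL
  set W : (Fin n → Fin 3 → Bool) → ℝ := fun xs => ∏ k, Qd θ₁ θ₃ (xs k) with hW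
  have hWnn : ∀ xs, 0 ≤ W xs := fun xs => W_nonneg h10 h11 h30 h31 xs
  -- symmetry: A ≥ 1/2
  have hTn : ∀ xs : Fin n → Fin 3 → Bool,
      c01 (fun k => tau (xs k)) = c02 xs ∧ c02 (fun k => tau (xs k)) = c01 xs := by
    intro xs
    constructor <;> rfl
  have hWtau : ∀ xs : Fin n → Fin 3 → Bool, W (fun k => tau (xs k)) = W xs := by
    intro xs
    exact Finset.prod_congr rfl (fun k _ => Qd_tau h10 h11 (xs k))
  have hTbij : Function.Bijective (fun xs : Fin n → Fin 3 → Bool => fun k => tau (xs k)) := by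
    have : Function.Involutive (fun xs : Fin n → Fin 3 → Bool => fun k => tau (xs k)) := by
      intro xs; funext k; exact tau_invol (xs k)
    exact this.bijective
  have hAA' : (∑ xs : Fin n → Fin 3 → Bool, if c01 xs ≤ c02 xs then W xs else 0)
      = ∑ xs : Fin n → Fin 3 → Bool, if c02 xs ≤ c01 xs then W xs else 0 := by
    apply Fintype.sum_bijective _ hTbij
    intro xs
    rw [(hTn xs).1, (hTn xs).2, hWtau xs]
  have hA : 1/2 ≤ ∑ xs : Fin n → Fin 3 → Bool, if c01 xs ≤ c02 xs then W xs else 0 := by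
    have htot : (1:ℝ) ≤ (∑ xs : Fin n → Fin 3 → Bool, if c01 xs ≤ c02 xs then W xs else 0)
        + ∑ xs : Fin n → Fin 3 → Bool, if c02 xs ≤ c01 xs then W xs else 0 := by
      rw [← Finset.sum_add_distrib]
      have h1 : ∀ xs : Fin n → Fin 3 → Bool, W xs ≤
          (if c01 xs ≤ c02 xs then W xs else 0) + (if c02 xs ≤ c01 xs then W xs else 0) := by
        intro xs
        rcases le_total (c01 xs) (c02 xs) with h | h
        · rw [if_pos h]
          have : 0 ≤ (if c02 xs ≤ c01 xs then W xs else 0) := by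
            split_ifs; exacts [hWnn xs, le_refl 0]
          linarith
        · rw [if_pos h]
          have : 0 ≤ (if c01 xs ≤ c02 xs then W xs else 0) := by
            split_ifs; exacts [hWnn xs, le_refl 0]
          linarith
      calc (1:ℝ) = ∑ xs : Fin n → Fin 3 → Bool, W xs := (W_sum h10 h11 h30 h31 n).symm
        _ ≤ _ := Finset.sum_le_sum (fun xs _ => h1 xs)
    linarith [hAA', htot]
  -- Chebyshev: B ≤ 1/4
  have hV : ∑ xs : Fin n → Fin 3 → Bool, W xs * (∑ k, zR (xs k)) ^ 2 ≤ n :=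
    second_moment n (Qd θ₁ θ₃) zR (Qd_sum h10 h11 h30 h31) (EZ1 h10 h11)
      (EZ2 h10 h11 h30 h31)
  have hLreal : 4 * (n:ℝ) ≤ ((L:ℝ) + 1) ^ 2 := by
    have h1 : n < (Nat.sqrt n + 1) * (Nat.sqrt n + 1) := Nat.lt_succ_sqrt n
    have h2 : (n:ℝ) < ((Nat.sqrt n : ℝ) + 1) * ((Nat.sqrt n : ℝ) + 1) := by
      exact_mod_cast h1
    rw [hL]; push_cast; nlinarith
  have hB : (∑ xs : Fin n → Fin 3 → Bool, if c01 xs + L < c02 xs then W xs else 0) ≤ 1/4 := by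
    have hp : (0:ℝ) < ((L:ℝ) + 1) ^ 2 := by positivity
    have hLB : ((L:ℝ) + 1) ^ 2 *
        (∑ xs : Fin n → Fin 3 → Bool, if c01 xs + L < c02 xs then W xs else 0)
          ≤ ∑ xs : Fin n → Fin 3 → Bool, W xs * (∑ k, zR (xs k)) ^ 2 := by
      rw [Finset.mul_sum]
      apply Finset.sum_le_sum
      intro xs _
      by_cases hc : c01 xs + L < c02 xs
      · rw [if_pos hc]
        have hS : ((L:ℝ) + 1) ≤ ∑ k, zR (xs k) := by
          rw [sum_zR]
          have : (c01 xs : ℝ) + (L:ℝ) + 1 ≤ (c02 xs : ℝ) := by exact_mod_cast hc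
          linarith
        have hS2 : ((L:ℝ) + 1) ^ 2 ≤ (∑ k, zR (xs k)) ^ 2 := by
          apply pow_le_pow_left₀ (by positivity) hS
        calc ((L:ℝ) + 1) ^ 2 * W xs ≤ (∑ k, zR (xs k)) ^ 2 * W xs :=
              mul_le_mul_of_nonneg_right hS2 (hWnn xs)
          _ = W xs * (∑ k, zR (xs k)) ^ 2 := by ring
      · rw [if_neg hc, mul_zero]
        exact mul_nonneg (hWnn xs) (sq_nonneg _)
    have hB1 : (∑ xs : Fin n → Fin 3 → Bool, if c01 xs + L < c02 xs then W xs else 0)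
        ≤ (n:ℝ) / (((L:ℝ) + 1) ^ 2) := by
      rw [le_div_iff₀ hp]
      calc (∑ xs : Fin n → Fin 3 → Bool, if c01 xs + L < c02 xs then W xs else 0)
            * (((L:ℝ) + 1) ^ 2)
          = ((L:ℝ) + 1) ^ 2 * _ := by ring
        _ ≤ _ := hLB
        _ ≤ (n:ℝ) := hV
    have hB2 : (n:ℝ) / (((L:ℝ) + 1) ^ 2) ≤ 1/4 := by
      rw [div_le_div_iff₀ hp (by norm_num)]
      linarith
    linarith
  -- combine: M ≥ 1/4
  have hM : 1/4 ≤ ∑ xs : Fin n → Fin 3 → Bool,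
      if c01 xs ≤ c02 xs ∧ c02 xs ≤ c01 xs + L then W xs else 0 := by
    have hpt : ∀ xs : Fin n → Fin 3 → Bool,
        (if c01 xs ≤ c02 xs then W xs else 0) - (if c01 xs + L < c02 xs then W xs else 0)
          ≤ (if c01 xs ≤ c02 xs ∧ c02 xs ≤ c01 xs + L then W xs else 0) := by
      intro xs
      have h0 := hWnn xs
      by_cases hP : c01 xs ≤ c02 xs <;> by_cases hR : c02 xs ≤ c01 xs + L
      · rw [if_pos (And.intro hP hR), if_pos hP, if_neg (not_lt.2 hR)]; linarith
      · rw [if_neg (show ¬ (c01 xs ≤ c02 xs ∧ c02 xs ≤ c01 xs + L) from fun h => hR h.2),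
          if_pos hP, if_pos (show c01 xs + L < c02 xs by omega)]; linarith
      · rw [if_neg (show ¬ (c01 xs ≤ c02 xs ∧ c02 xs ≤ c01 xs + L) from fun h => hP h.1),
          if_neg hP, if_neg (show ¬ c01 xs + L < c02 xs by omega)]; linarith
      · exact absurd (show c01 xs ≤ c02 xs by omega) hP
    have := Finset.sum_le_sum (fun xs (_ : xs ∈ Finset.univ) => hpt xs)
    rw [Finset.sum_sub_distrib] at this
    linarith
  -- final chain
  have hCpos : (0:ℝ) < rho θ₁ θ₃ ^ n * (rr θ₁ ^ L)⁻¹ := by positivity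
  have hfin : ∀ xs : Fin n → Fin 3 → Bool,
      (if c01 xs ≤ c02 xs ∧ c02 xs ≤ c01 xs + L
        then rho θ₁ θ₃ ^ n * (rr θ₁ ^ L)⁻¹ * W xs else 0)
        ≤ (if xs ∈ {xs : Fin n → Fin 3 → Bool | Ahat xs 0 1 ≤ Ahat xs 0 2}
          then ∏ k, Ptilde θ₁ θ₃ (xs k) else 0) := by
    intro xs
    by_cases hc : c01 xs ≤ c02 xs ∧ c02 xs ≤ c01 xs + L
    · rw [if_pos hc, if_pos (show xs ∈ _ from (event_iff hn xs).2 hc.1)]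
      rw [prod_decomp h10 h11 h30 h31]
      have ht : (rr θ₁ ^ L)⁻¹ ≤ (rr θ₁)⁻¹ ^ c02 xs * rr θ₁ ^ c01 xs := by
        have h1 : rr θ₁ ^ c02 xs ≤ rr θ₁ ^ (c01 xs + L) := pow_le_pow_right₀ hr1 hc.2
        have h2 : (rr θ₁ ^ (c01 xs + L))⁻¹ ≤ (rr θ₁ ^ c02 xs)⁻¹ :=
          inv_anti₀ (pow_pos hrpos _) h1
        have h3 : (rr θ₁ ^ L)⁻¹ = (rr θ₁ ^ (c01 xs + L))⁻¹ * rr θ₁ ^ c01 xs := by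
          field_simp
          rw [pow_add]; ring
        rw [h3, inv_pow]
        exact mul_le_mul_of_nonneg_right h2 (pow_nonneg hrpos.le _)
      have hbase : 0 ≤ rho θ₁ θ₃ ^ n * W xs :=
        mul_nonneg (pow_nonneg hrhopos.le n) (hWnn xs)
      calc rho θ₁ θ₃ ^ n * (rr θ₁ ^ L)⁻¹ * W xs
          = (rho θ₁ θ₃ ^ n * W xs) * (rr θ₁ ^ L)⁻¹ := by ring
        _ ≤ (rho θ₁ θ₃ ^ n * W xs) * ((rr θ₁)⁻¹ ^ c02 xs * rr θ₁ ^ c01 xs) :=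
            mul_le_mul_of_nonneg_left ht hbase
        _ = rho θ₁ θ₃ ^ n * W xs * ((rr θ₁)⁻¹ ^ c02 xs * rr θ₁ ^ c01 xs) := by ring
    · rw [if_neg hc]
      split_ifs
      · exact Finset.prod_nonneg (fun k _ =>
          Ptilde_nonneg h10 (by linarith) h30 (by linarith) (xs k))
      · exact le_refl 0
  calc rho θ₁ θ₃ ^ n * (rr θ₁ ^ L)⁻¹ * (1/4)
      ≤ rho θ₁ θ₃ ^ n * (rr θ₁ ^ L)⁻¹ *
        (∑ xs : Fin n → Fin 3 → Bool,
          if c01 xs ≤ c02 xs ∧ c02 xs ≤ c01 xs + L then W xs else 0) :=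
        mul_le_mul_of_nonneg_left hM hCpos.le
    _ = ∑ xs : Fin n → Fin 3 → Bool,
        (if c01 xs ≤ c02 xs ∧ c02 xs ≤ c01 xs + L
          then rho θ₁ θ₃ ^ n * (rr θ₁ ^ L)⁻¹ * W xs else 0) := by
        rw [Finset.mul_sum]
        apply Finset.sum_congr rfl
        intro xs _
        rw [mul_ite, mul_zero]
    _ ≤ ∑ xs : Fin n → Fin 3 → Bool,
        (if xs ∈ {xs : Fin n → Fin 3 → Bool | Ahat xs 0 1 ≤ Ahat xs 0 2}
          then ∏ k, Ptilde θ₁ θ₃ (xs k) else 0) :=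
        Finset.sum_le_sum (fun xs _ => hfin xs)
    _ = iidProb (Ptilde θ₁ θ₃) n {xs | Ahat xs 0 1 ≤ Ahat xs 0 2} := rfl

end lowerb

section final
variable {θ₁ θ₃ : ℝ} (h10 : 0 < θ₁) (h11 : θ₁ < 1/2) (h30 : 0 < θ₃) (h31 : θ₃ < 1/2)

include h10 h11 h30 h31 in
theorem main_tendsto :
    Filter.Tendsto (fun n : ℕ =>
      -(1 / (n : ℝ)) * Real.log (iidProb (Ptilde θ₁ θ₃) n
        {xs | Ahat xs 0 1 ≤ Ahat xs 0 2}))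
      Filter.atTop (nhds (-Real.log (rho θ₁ θ₃))) := by
  have hrpos := rr_pos h10 h11
  have hr1 := rr_one_le h10 h11
  have hrhopos := rho_pos h10 h11 h30 h31
  set c : ℝ := Real.log (rr θ₁) with hc
  have hc0 : 0 ≤ c := Real.log_nonneg hr1
  set d : ℝ := Real.log 4 with hd
  have hd0 : 0 ≤ d := Real.log_nonneg (by norm_num)
  set f : ℕ → ℝ := fun n => -(1 / (n : ℝ)) * Real.log (iidProb (Ptilde θ₁ θ₃) n
    {xs | Ahat xs 0 1 ≤ Ahat xs 0 2}) with hf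
  set h : ℕ → ℝ := fun n =>
    -Real.log (rho θ₁ θ₃) + ((2 * (Nat.sqrt n : ℝ) + 2) * c + d) / n with hh
  -- bounds
  have hbnd : ∀ n : ℕ, 1 ≤ n → (-Real.log (rho θ₁ θ₃) ≤ f n ∧ f n ≤ h n) := by
    intro n hn1
    have hn : 0 < n := hn1
    have hnR : (0:ℝ) < n := Nat.cast_pos.2 hn
    set L : ℕ := 2 * Nat.sqrt n + 2 with hL
    set Pn : ℝ := iidProb (Ptilde θ₁ θ₃) n {xs | Ahat xs 0 1 ≤ Ahat xs 0 2} with hPn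
    have hub : Pn ≤ rho θ₁ θ₃ ^ n := upper h10 h11 h30 h31 hn
    have hlb : rho θ₁ θ₃ ^ n * (rr θ₁ ^ L)⁻¹ * (1/4) ≤ Pn := lower h10 h11 h30 h31 hn
    have hLBpos : (0:ℝ) < rho θ₁ θ₃ ^ n * (rr θ₁ ^ L)⁻¹ * (1/4) := by positivity
    have hPpos : 0 < Pn := lt_of_lt_of_le hLBpos hlb
    constructor
    · -- lower bound on f
      have hlog : Real.log Pn ≤ (n:ℝ) * Real.log (rho θ₁ θ₃) := by
        calc Real.log Pn ≤ Real.log (rho θ₁ θ₃ ^ n) := Real.log_le_log hPpos hub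
          _ = (n:ℝ) * Real.log (rho θ₁ θ₃) := by rw [Real.log_pow]
      have hneg : -(1/(n:ℝ)) ≤ 0 := neg_nonpos.mpr (by positivity)
      have := mul_le_mul_of_nonpos_left hlog hneg
      calc -Real.log (rho θ₁ θ₃)
          = -(1/(n:ℝ)) * ((n:ℝ) * Real.log (rho θ₁ θ₃)) := by
            field_simp
        _ ≤ -(1/(n:ℝ)) * Real.log Pn := this
        _ = f n := rfl
    · -- upper bound on f
      have hlog2 : (n:ℝ) * Real.log (rho θ₁ θ₃) - (L:ℝ) * c - d ≤ Real.log Pn := by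
        have he : Real.log (rho θ₁ θ₃ ^ n * (rr θ₁ ^ L)⁻¹ * (1/4))
            = (n:ℝ) * Real.log (rho θ₁ θ₃) - (L:ℝ) * c - d := by
          rw [Real.log_mul (by positivity) (by norm_num),
            Real.log_mul (by positivity) (by positivity),
            Real.log_pow, Real.log_inv, Real.log_pow, one_div, Real.log_inv]
          ring
        calc (n:ℝ) * Real.log (rho θ₁ θ₃) - (L:ℝ) * c - d
            = Real.log (rho θ₁ θ₃ ^ n * (rr θ₁ ^ L)⁻¹ * (1/4)) := he.symm
          _ ≤ Real.log Pn := Real.log_le_log hLBpos hlb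
      have hneg : -(1/(n:ℝ)) ≤ 0 := neg_nonpos.mpr (by positivity)
      have hmul := mul_le_mul_of_nonpos_left hlog2 hneg
      calc f n = -(1/(n:ℝ)) * Real.log Pn := rfl
        _ ≤ -(1/(n:ℝ)) * ((n:ℝ) * Real.log (rho θ₁ θ₃) - (L:ℝ) * c - d) := hmul
        _ = -Real.log (rho θ₁ θ₃) + ((L:ℝ) * c + d) / n := by
            field_simp; ring
        _ = h n := by
            rw [hh, hL]
            push_cast
            ring
  -- tendsto of h
  have hsq : Filter.Tendsto (fun n : ℕ => Real.sqrt (n:ℝ)) atTop atTop := by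
    have hcomp := (tendsto_rpow_atTop (by norm_num : (0:ℝ) < 1/2)).comp
      (tendsto_natCast_atTop_atTop (R := ℝ))
    refine hcomp.congr (fun n => ?_)
    exact (Real.sqrt_eq_rpow ((n:ℝ))).symm
  have hinv : Filter.Tendsto (fun n : ℕ => (Real.sqrt (n:ℝ))⁻¹) atTop (nhds 0) :=
    hsq.inv_tendsto_atTop
  have Tsq : Filter.Tendsto (fun n : ℕ => (Nat.sqrt n : ℝ) / n) atTop (nhds 0) := by
    apply tendsto_of_tendsto_of_tendsto_of_le_of_le' tendsto_const_nhds hinv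
    · exact Filter.Eventually.of_forall (fun n => by positivity)
    · filter_upwards [Filter.eventually_ge_atTop 1] with n hn1
      have hnR : (0:ℝ) < n := Nat.cast_pos.2 hn1
      have h1 : (Nat.sqrt n : ℝ) ≤ Real.sqrt (n:ℝ) := by
        rw [Real.le_sqrt (by positivity) (by positivity)]
        exact_mod_cast Nat.sqrt_le' n
      calc (Nat.sqrt n : ℝ) / n ≤ Real.sqrt (n:ℝ) / n := by gcongr
        _ = 1 / Real.sqrt (n:ℝ) := Real.sqrt_div_self'
        _ = (Real.sqrt (n:ℝ))⁻¹ := one_div _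
  have T2 : Filter.Tendsto (fun n : ℕ => (1:ℝ) / n) atTop (nhds 0) :=
    tendsto_one_div_atTop_nhds_zero_nat
  have Th : Filter.Tendsto h atTop (nhds (-Real.log (rho θ₁ θ₃))) := by
    have Tt : Filter.Tendsto (fun n : ℕ => ((2 * (Nat.sqrt n : ℝ) + 2) * c + d) / n)
        atTop (nhds 0) := by
      have heq : ∀ n : ℕ, ((2 * (Nat.sqrt n : ℝ) + 2) * c + d) / n
          = (2 * c) * ((Nat.sqrt n : ℝ) / n) + ((2 * c + d)) * ((1:ℝ)/n) := by
        intro n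
        rcases eq_or_ne ((n:ℝ)) 0 with h0 | h0
        · rw [h0]; simp
        · field_simp; ring
      have := (Tsq.const_mul (2*c)).add (T2.const_mul (2*c+d))
      simp only [mul_zero, add_zero] at this
      exact Filter.Tendsto.congr (fun n => (heq n).symm) this
    have := Tt.const_add (-Real.log (rho θ₁ θ₃))
    simpa using this
  -- squeeze
  apply tendsto_of_tendsto_of_tendsto_of_le_of_le' tendsto_const_nhds Th
  · filter_upwards [Filter.eventually_ge_atTop 1] with n hn
    exact (hbnd n hn).1
  · filter_upwards [Filter.eventually_ge_atTop 1] with n hn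
    exact (hbnd n hn).2

end final

end Stmt4

/-- error exponent of the crossover event `Â_{1,3} ≥ Â_{1,2}` for the
3-node chain with edge parameters `θ₁, θ₃`. -/
theorem stmt4 (θ₁ θ₃ : ℝ) (hθ₁0 : 0 < θ₁) (hθ₁1 : θ₁ < 1 / 2)
    (hθ₃0 : 0 < θ₃) (hθ₃1 : θ₃ < 1 / 2) :
    Filter.Tendsto (fun n : ℕ =>
      -(1 / (n : ℝ)) * Real.log (iidProb (Ptilde θ₁ θ₃) n
        {xs | Ahat xs 0 1 ≤ Ahat xs 0 2}))
      Filter.atTop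
      (nhds (-Real.log (1 - θ₃ * (1 - Real.sqrt (4 * θ₁ * (1 - θ₁)))))) := by
  exact Stmt4.main_tendsto hθ₁0 hθ₁1 hθ₃0 hθ₃1
end

section
/- Let X be a finite set, P a probability mass function on X, and g : X → {−1, 0, 1} a function such that P({x : g(x) = 1}) > 0 and ∑_{x∈X} g(x)·P(x) < 0. Then the minimum of the Kullback–Leibler divergence D(Q‖P) over all probability mass functions Q on X satisfying ∑_{x∈X} g(x)·Q(x) ≥ 0 equals −log( P({x : g(x) = 0}) + 2·√( P({x : g(x) = 1}) · P({x : g(x) = −1}) ) ), and it is attained by the tilted distribution Q*(x) = P(x)·e^{λg(x)} / ∑_y P(y)·e^{λg(y)} with λ = (1/2)·log( P({g = −1}) / P({g = 1}) ). -/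
open scoped Classical BigOperators
open Filter

/-- explicit solution of the KL-divergence minimization over distributions
satisfying `∑ g·Q ≥ 0`, attained by the exponentially tilted distribution. -/
theorem stmt5 {X : Type*} [Fintype X] (P : X → ℝ) (g : X → ℝ)
    (hP0 : ∀ x, 0 ≤ P x) (hP1 : ∑ x : X, P x = 1)
    (hg : ∀ x, g x = -1 ∨ g x = 0 ∨ g x = 1)
    (hpos : 0 < ∑ x ∈ Finset.univ.filter (fun x => g x = 1), P x)
    (hneg : ∑ x : X, g x * P x < 0) :
    IsLeast { d : ℝ | ∃ Q : X → ℝ, (∀ x, 0 ≤ Q x) ∧ (∑ x : X, Q x = 1) ∧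
        (∀ x, P x = 0 → Q x = 0) ∧ (0 ≤ ∑ x : X, g x * Q x) ∧ d = klDiv Q P }
      (-Real.log ((∑ x ∈ Finset.univ.filter (fun x => g x = 0), P x)
        + 2 * Real.sqrt ((∑ x ∈ Finset.univ.filter (fun x => g x = 1), P x)
          * (∑ x ∈ Finset.univ.filter (fun x => g x = -1), P x)))) ∧
    (letI lam : ℝ := (1 / 2) * Real.log
        ((∑ x ∈ Finset.univ.filter (fun x => g x = -1), P x)
          / (∑ x ∈ Finset.univ.filter (fun x => g x = 1), P x))
     letI Qstar : X → ℝ := fun x =>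
        P x * Real.exp (lam * g x) / (∑ y : X, P y * Real.exp (lam * g y))
     (∀ x, 0 ≤ Qstar x) ∧ (∑ x : X, Qstar x = 1) ∧ (∀ x, P x = 0 → Qstar x = 0) ∧
       (0 ≤ ∑ x : X, g x * Qstar x) ∧
       klDiv Qstar P = -Real.log ((∑ x ∈ Finset.univ.filter (fun x => g x = 0), P x)
        + 2 * Real.sqrt ((∑ x ∈ Finset.univ.filter (fun x => g x = 1), P x)
          * (∑ x ∈ Finset.univ.filter (fun x => g x = -1), P x)))) := by
  classical
  set p1 := ∑ x ∈ Finset.univ.filter (fun x => g x = 1), P x with hp1def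
  set p0 := ∑ x ∈ Finset.univ.filter (fun x => g x = 0), P x with hp0def
  set pm := ∑ x ∈ Finset.univ.filter (fun x => g x = -1), P x with hpmdef
  set lam := (1 / 2 : ℝ) * Real.log (pm / p1) with hlamdef
  set Z := ∑ y : X, P y * Real.exp (lam * g y) with hZdef
  set Qstar := fun x => P x * Real.exp (lam * g x) / Z with hQdef
  set s := Real.sqrt (p1 * pm) with hsdef
  have hsplit : ∀ F : X → ℝ, ∑ x : X, F x =
      (∑ x ∈ Finset.univ.filter (fun x => g x = 1), F x)
    + (∑ x ∈ Finset.univ.filter (fun x => g x = 0), F x)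
    + (∑ x ∈ Finset.univ.filter (fun x => g x = -1), F x) := by
    intro F
    rw [Finset.sum_filter, Finset.sum_filter, Finset.sum_filter,
      ← Finset.sum_add_distrib, ← Finset.sum_add_distrib]
    refine Finset.sum_congr rfl fun x _ => ?_
    rcases hg x with h | h | h <;> rw [h] <;> norm_num
  have hgsum : ∀ Q : X → ℝ, ∑ x : X, g x * Q x
      = (∑ x ∈ Finset.univ.filter (fun x => g x = 1), Q x)
      - (∑ x ∈ Finset.univ.filter (fun x => g x = -1), Q x) := by
    intro Q
    rw [hsplit (fun x => g x * Q x)]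
    have e1 : ∑ x ∈ Finset.univ.filter (fun x => g x = 1), g x * Q x
        = ∑ x ∈ Finset.univ.filter (fun x => g x = 1), Q x :=
      Finset.sum_congr rfl fun x hx => by
        rw [(Finset.mem_filter.mp hx).2, one_mul]
    have e0 : ∑ x ∈ Finset.univ.filter (fun x => g x = 0), g x * Q x = 0 :=
      Finset.sum_eq_zero fun x hx => by
        rw [(Finset.mem_filter.mp hx).2, zero_mul]
    have em : ∑ x ∈ Finset.univ.filter (fun x => g x = -1), g x * Q x
        = ∑ x ∈ Finset.univ.filter (fun x => g x = -1), -Q x :=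
      Finset.sum_congr rfl fun x hx => by
        rw [(Finset.mem_filter.mp hx).2]; ring
    rw [e1, e0, em, Finset.sum_neg_distrib]; ring
  have hp1 : 0 < p1 := hpos
  have hpmgt : p1 < pm := by
    have h := hneg
    rw [hgsum P] at h
    linarith
  have hpm : 0 < pm := lt_trans hp1 hpmgt
  have hp0nn : 0 ≤ p0 := Finset.sum_nonneg fun x _ => hP0 x
  have hdivpos : 0 < pm / p1 := div_pos hpm hp1
  have hexp : Real.exp lam = Real.sqrt (pm / p1) := by
    have h2 : Real.sqrt (pm / p1) = Real.exp ((1 / 2 : ℝ) * Real.log (pm / p1)) := by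
      rw [Real.sqrt_eq_rpow, Real.rpow_def_of_pos hdivpos, mul_comm]
    rw [hlamdef, h2]
  have hspos : 0 < s := Real.sqrt_pos.mpr (mul_pos hp1 hpm)
  have he1 : p1 * Real.exp lam = s := by
    rw [hexp, hsdef, show pm / p1 = (p1 * pm) / p1 ^ 2 by field_simp,
      Real.sqrt_div (mul_nonneg hp1.le hpm.le), Real.sqrt_sq hp1.le]
    field_simp
  have hem : pm * Real.exp (-lam) = s := by
    have key : s * Real.sqrt (pm / p1) = pm := by
      rw [hsdef, ← Real.sqrt_mul (mul_nonneg hp1.le hpm.le),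
        show p1 * pm * (pm / p1) = pm ^ 2 by field_simp]
      exact Real.sqrt_sq hpm.le
    have hq : (0:ℝ) < Real.sqrt (pm / p1) := Real.sqrt_pos.mpr hdivpos
    rw [Real.exp_neg, hexp]
    field_simp
    have h4 : s = Real.sqrt p1 * Real.sqrt pm := by rw [hsdef, Real.sqrt_mul hp1.le]
    have h5 : Real.sqrt pm * Real.sqrt pm = pm := Real.mul_self_sqrt hpm.le
    have h6 : s * Real.sqrt pm = Real.sqrt p1 * pm := by rw [h4, mul_assoc, h5]
    linarith [h6]
  have hZ1 : Z = p1 * Real.exp lam + p0 + pm * Real.exp (-lam) := by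
    rw [hZdef, hsplit (fun y => P y * Real.exp (lam * g y))]
    have e1 : ∑ x ∈ Finset.univ.filter (fun x => g x = 1), P x * Real.exp (lam * g x)
        = ∑ x ∈ Finset.univ.filter (fun x => g x = 1), P x * Real.exp lam :=
      Finset.sum_congr rfl fun x hx => by
        rw [(Finset.mem_filter.mp hx).2, mul_one]
    have e0 : ∑ x ∈ Finset.univ.filter (fun x => g x = 0), P x * Real.exp (lam * g x)
        = ∑ x ∈ Finset.univ.filter (fun x => g x = 0), P x :=
      Finset.sum_congr rfl fun x hx => by
        rw [(Finset.mem_filter.mp hx).2, mul_zero, Real.exp_zero, mul_one]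
    have em : ∑ x ∈ Finset.univ.filter (fun x => g x = -1), P x * Real.exp (lam * g x)
        = ∑ x ∈ Finset.univ.filter (fun x => g x = -1), P x * Real.exp (-lam) :=
      Finset.sum_congr rfl fun x hx => by
        rw [(Finset.mem_filter.mp hx).2, mul_neg_one]
    rw [e1, e0, em, ← Finset.sum_mul, ← Finset.sum_mul, ← hp1def, ← hp0def, ← hpmdef]
  have hZ2 : Z = p0 + 2 * s := by rw [hZ1, he1, hem]; ring
  have hZpos : 0 < Z := by rw [hZ2]; linarith
  have hQnn : ∀ x, 0 ≤ Qstar x := fun x =>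
    div_nonneg (mul_nonneg (hP0 x) (Real.exp_pos _).le) hZpos.le
  have hQabs : ∀ x, P x = 0 → Qstar x = 0 := fun x hx => by
    rw [hQdef]; dsimp only; rw [hx, zero_mul, zero_div]
  have hQstarpos : ∀ x, P x ≠ 0 → 0 < Qstar x := fun x hx =>
    div_pos (mul_pos (lt_of_le_of_ne (hP0 x) (Ne.symm hx)) (Real.exp_pos _)) hZpos
  have hQ1sum : ∑ x ∈ Finset.univ.filter (fun x => g x = 1), Qstar x = s / Z := by
    have e : ∀ x ∈ Finset.univ.filter (fun x => g x = 1),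
        Qstar x = P x * Real.exp lam / Z := fun x hx => by
      rw [hQdef]; dsimp only; rw [(Finset.mem_filter.mp hx).2, mul_one]
    rw [Finset.sum_congr rfl e, ← Finset.sum_div, ← Finset.sum_mul, ← hp1def, he1]
  have hQmsum : ∑ x ∈ Finset.univ.filter (fun x => g x = -1), Qstar x = s / Z := by
    have e : ∀ x ∈ Finset.univ.filter (fun x => g x = -1),
        Qstar x = P x * Real.exp (-lam) / Z := fun x hx => by
      rw [hQdef]; dsimp only; rw [(Finset.mem_filter.mp hx).2, mul_neg_one]
    rw [Finset.sum_congr rfl e, ← Finset.sum_div, ← Finset.sum_mul, ← hpmdef, hem]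
  have hQsum : ∑ x : X, Qstar x = 1 := by
    rw [hQdef]; dsimp only
    rw [← Finset.sum_div, ← hZdef]
    exact div_self hZpos.ne'
  have hgQstar : ∑ x : X, g x * Qstar x = 0 := by
    rw [hgsum Qstar, hQ1sum, hQmsum, sub_self]
  have hlin : ∀ Q : X → ℝ, ∑ x : X, Q x * (lam * g x - Real.log Z)
      = lam * (∑ x : X, g x * Q x) - Real.log Z * (∑ x : X, Q x) := by
    intro Q
    rw [Finset.mul_sum, Finset.mul_sum, ← Finset.sum_sub_distrib]
    exact Finset.sum_congr rfl fun x _ => by ring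
  have klQstar : klDiv Qstar P = -Real.log Z := by
    have hpt : ∀ x, Qstar x * Real.log (Qstar x / P x)
        = Qstar x * (lam * g x - Real.log Z) := by
      intro x
      by_cases hx : P x = 0
      · rw [hQabs x hx, zero_mul, zero_mul]
      · have hPpos : 0 < P x := lt_of_le_of_ne (hP0 x) (Ne.symm hx)
        have h2 : Qstar x / P x = Real.exp (lam * g x) / Z := by
          rw [hQdef]; dsimp only; field_simp
        rw [h2, Real.log_div (Real.exp_ne_zero _) hZpos.ne', Real.log_exp]
    unfold klDiv
    rw [Finset.sum_congr rfl fun x _ => hpt x, hlin Qstar, hgQstar, hQsum]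
    ring
  have hlamnn : 0 ≤ lam := by
    rw [hlamdef]
    exact mul_nonneg (by norm_num) (Real.log_nonneg ((one_le_div hp1).mpr hpmgt.le))
  refine ⟨⟨⟨Qstar, hQnn, hQsum, hQabs, le_of_eq hgQstar.symm, by rw [klQstar, hZ2]⟩, ?_⟩, ?_⟩
  · rintro d ⟨Q, hQnn', hQsum', hQabs', hgQ', rfl⟩
    have hdec : ∀ x, Q x * Real.log (Q x / P x)
        = Q x * Real.log (Q x / Qstar x) + Q x * (lam * g x - Real.log Z) := by
      intro x
      by_cases hq : Q x = 0
      · rw [hq, zero_mul, zero_mul, zero_mul, add_zero]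
      · have hPx : P x ≠ 0 := fun h => hq (hQabs' x h)
        have hPpos : 0 < P x := lt_of_le_of_ne (hP0 x) (Ne.symm hPx)
        have hQs : 0 < Qstar x := hQstarpos x hPx
        have hlogQs : Real.log (Qstar x) = Real.log (P x) + lam * g x - Real.log Z := by
          rw [hQdef]; dsimp only
          rw [Real.log_div (by positivity) hZpos.ne',
            Real.log_mul hPx (Real.exp_ne_zero _), Real.log_exp]
        rw [Real.log_div hq hPx, Real.log_div hq hQs.ne', hlogQs]
        ring
    have hgibbs : 0 ≤ ∑ x : X, Q x * Real.log (Q x / Qstar x) := by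
      have hpt : ∀ x, Q x - Qstar x ≤ Q x * Real.log (Q x / Qstar x) := by
        intro x
        by_cases hq : Q x = 0
        · rw [hq, zero_mul, zero_sub]
          simpa using hQnn x
        · have hPx : P x ≠ 0 := fun h => hq (hQabs' x h)
          have hQs : 0 < Qstar x := hQstarpos x hPx
          have hQpos : 0 < Q x := lt_of_le_of_ne (hQnn' x) (Ne.symm hq)
          have hlog := Real.log_le_sub_one_of_pos (div_pos hQs hQpos)
          have hrw : Real.log (Q x / Qstar x) = -Real.log (Qstar x / Q x) := by
            rw [← Real.log_inv, inv_div]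
          have h3 : Qstar x / Q x * Q x = Qstar x := div_mul_cancel₀ _ hQpos.ne'
          rw [hrw]
          nlinarith
      calc (0:ℝ) = ∑ x : X, (Q x - Qstar x) := by
            rw [Finset.sum_sub_distrib, hQsum', hQsum]; ring
        _ ≤ _ := Finset.sum_le_sum fun x _ => hpt x
    have hsum_eq : klDiv Q P = (∑ x : X, Q x * Real.log (Q x / Qstar x))
        + (lam * (∑ x : X, g x * Q x) - Real.log Z * (∑ x : X, Q x)) := by
      unfold klDiv
      rw [Finset.sum_congr rfl fun x _ => hdec x, Finset.sum_add_distrib, hlin Q]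
    have hZlog : Real.log (p0 + 2 * s) = Real.log Z := by rw [hZ2]
    have hlg : 0 ≤ lam * (∑ x : X, g x * Q x) := mul_nonneg hlamnn hgQ'
    rw [hsum_eq, hQsum', mul_one]
    linarith
  · exact ⟨hQnn, hQsum, hQabs, le_of_eq hgQstar.symm, by rw [klQstar, hZ2]⟩
end

section
/- Let θ ∈ (0, 1/2) and let P = P_{T,θ} on {0,1}³ for the tree T with edge set {{1,2},{2,3}}. For a probability mass function Q on {0,1}³, let Q_{i,j} denote its marginal on coordinates (i,j), Q_i its marginal on coordinate i, and define the mutual information I(Q_{i,j}) := D(Q_{i,j} ‖ Q_i ⊗ Q_j), where Q_i ⊗ Q_j denotes the product of the marginals. Then the Chow–Liu error exponent satisfies min{ D(Q‖P) : Q a probability mass function on {0,1}³ with I(Q_{1,2}) ≤ I(Q_{1,3}) } = −log(1 − θ·(1 − √(4θ(1−θ)))). -/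
open scoped Classical BigOperators
open Filter

set_option maxHeartbeats 4000000

noncomputable section StmtSevenAux

open Real

lemma klPt {a b : ℝ} (ha : 0 ≤ a) (hb : 0 ≤ b) (himp : b = 0 → a = 0) :
    a - b ≤ a * (Real.log a - Real.log b) := by
  rcases hb.eq_or_lt with h | hb'
  · rw [himp h.symm, h.symm]; simp
  rcases ha.eq_or_lt with h | ha'
  · rw [← h]; simp; linarith
  have h1 : Real.log (b/a) ≤ b/a - 1 := Real.log_le_sub_one_of_pos (by positivity)
  rw [Real.log_div (ne_of_gt hb') (ne_of_gt ha')] at h1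
  have h2 := mul_le_mul_of_nonneg_left h1 ha
  have h3 : a * (b/a - 1) = b - a := by field_simp
  rw [h3] at h2
  nlinarith

lemma logSum2 {a1 a2 b1 b2 S B : ℝ} (hS : S = a1 + a2) (hB : B = b1 + b2)
    (ha1 : 0 ≤ a1) (ha2 : 0 ≤ a2) (hb1 : 0 ≤ b1) (hb2 : 0 ≤ b2)
    (h1 : b1 = 0 → a1 = 0) (h2 : b2 = 0 → a2 = 0) :
    S * (Real.log S - Real.log B) ≤
      a1 * (Real.log a1 - Real.log b1) + a2 * (Real.log a2 - Real.log b2) := by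
  subst hS hB
  rcases hb1.eq_or_lt with h | hb1'
  · rw [h1 h.symm, ← h]; simp
  rcases hb2.eq_or_lt with h | hb2'
  · rw [h2 h.symm, ← h]; simp
  have hB' : 0 < b1 + b2 := by linarith
  rcases (add_nonneg ha1 ha2).eq_or_lt with h | hS'
  · have e1 : a1 = 0 := by linarith
    have e2 : a2 = 0 := by linarith
    rw [e1, e2]; simp
  have key1 : a1 - b1 * ((a1+a2)/(b1+b2)) ≤ a1 * (Real.log a1 - Real.log (b1 * ((a1+a2)/(b1+b2)))) :=
    klPt ha1 (by positivity) (fun h => absurd h (by positivity))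
  have key2 : a2 - b2 * ((a1+a2)/(b1+b2)) ≤ a2 * (Real.log a2 - Real.log (b2 * ((a1+a2)/(b1+b2)))) :=
    klPt ha2 (by positivity) (fun h => absurd h (by positivity))
  have e1 : Real.log (b1 * ((a1+a2)/(b1+b2))) = Real.log b1 + (Real.log (a1+a2) - Real.log (b1+b2)) := by
    rw [Real.log_mul (ne_of_gt hb1') (by positivity), Real.log_div (ne_of_gt hS') (ne_of_gt hB')]
  have e2 : Real.log (b2 * ((a1+a2)/(b1+b2))) = Real.log b2 + (Real.log (a1+a2) - Real.log (b1+b2)) := by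
    rw [Real.log_mul (ne_of_gt hb2') (by positivity), Real.log_div (ne_of_gt hS') (ne_of_gt hB')]
  rw [e1] at key1; rw [e2] at key2
  have hsum : b1 * ((a1+a2)/(b1+b2)) + b2 * ((a1+a2)/(b1+b2)) = a1 + a2 := by
    field_simp
  nlinarith [key1, key2]

lemma term_split1 {a p : ℝ} (ha : 0 ≤ a) (hp : 0 < p) :
    a * Real.log (a/p) = a * (Real.log a - Real.log p) := by
  rcases ha.eq_or_lt with h | ha'
  · rw [← h]; simp
  · rw [Real.log_div (ne_of_gt ha') (ne_of_gt hp)]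

lemma term_split2 {a b c : ℝ} (ha : 0 ≤ a) (hab : a ≤ b) (hac : a ≤ c) :
    a * Real.log (a/(b*c)) = a * (Real.log a - Real.log b - Real.log c) := by
  rcases ha.eq_or_lt with h | ha'
  · rw [← h]; simp
  · have hb : 0 < b := lt_of_lt_of_le ha' hab
    have hc : 0 < c := lt_of_lt_of_le ha' hac
    rw [Real.log_div (ne_of_gt ha') (by positivity), Real.log_mul (ne_of_gt hb) (ne_of_gt hc)]
    ring

lemma klPt2 {a r u : ℝ} (ha : 0 ≤ a) (hr : 0 ≤ r) (hu : 0 ≤ u) (har : a ≤ r) (hau : a ≤ u) :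
    a - r*u ≤ a * (Real.log a - Real.log r - Real.log u) := by
  rcases ha.eq_or_lt with h | ha'
  · rw [← h]; simp; positivity
  have hr' : 0 < r := lt_of_lt_of_le ha' har
  have hu' : 0 < u := lt_of_lt_of_le ha' hau
  have := klPt ha (le_of_lt (mul_pos hr' hu')) (fun h => absurd h (by positivity))
  rw [Real.log_mul (ne_of_gt hr') (ne_of_gt hu')] at this
  nlinarith

lemma half_pair {a b : ℝ} (ha : 0 ≤ a) (hb : 0 ≤ b) :
    0 ≤ a * Real.log a + b * Real.log b - (a+b) * Real.log (a+b) + (a+b) * Real.log 2 := by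
  rcases (add_nonneg ha hb).eq_or_lt with h | hS
  · have e1 : a = 0 := by linarith
    have e2 : b = 0 := by linarith
    rw [e1, e2]; simp
  have k1 : a - (a+b)/2 ≤ a * (Real.log a - Real.log ((a+b)/2)) :=
    klPt ha (by positivity) (fun h => absurd h (by positivity))
  have k2 : b - (a+b)/2 ≤ b * (Real.log b - Real.log ((a+b)/2)) :=
    klPt hb (by positivity) (fun h => absurd h (by positivity))
  have e : Real.log ((a+b)/2) = Real.log (a+b) - Real.log 2 :=
    Real.log_div (ne_of_gt hS) two_ne_zero
  rw [e] at k1 k2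
  nlinarith [k1, k2]

lemma sum8 (g : (Fin 3 → Bool) → ℝ) :
    ∑ x : Fin 3 → Bool, g x =
      g ![false,false,false] + g ![false,false,true] + g ![false,true,false] + g ![false,true,true] +
      g ![true,false,false] + g ![true,false,true] + g ![true,true,false] + g ![true,true,true] := by
  rw [← Equiv.sum_comp (⟨fun p => ![p.1, p.2.1, p.2.2], fun f => (f 0, f 1, f 2),
      fun p => by simp, fun f => by funext i; fin_cases i <;> simp⟩ :
      (Bool × Bool × Bool) ≃ (Fin 3 → Bool)) g]
  simp only [Fintype.sum_prod_type, Fintype.sum_bool, Equiv.coe_fn_mk]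
  ring

lemma chainA_edgeFinset : chainA.edgeFinset = {s(0,1), s(1,2)} := by
  ext e
  refine Sym2.ind (fun i j => ?_) e
  rw [SimpleGraph.mem_edgeFinset]
  simp only [SimpleGraph.mem_edgeFinset, chainA, SimpleGraph.edgeSet_fromEdgeSet,
    Set.mem_diff, Set.mem_insert_iff, Set.mem_singleton_iff, Set.mem_setOf_eq,
    Sym2.isDiag_iff_proj_eq, Finset.mem_insert, Finset.mem_singleton]
  constructor
  · rintro ⟨h1, _⟩; exact h1
  · rintro (h | h) <;> rw [Sym2.eq_iff] at h <;>
      rcases h with ⟨h1, h2⟩ | ⟨h1, h2⟩ <;> subst h1 <;> subst h2 <;>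
      simp [Sym2.eq_iff]

lemma isingP_atom (θ : ℝ) (x : Fin 3 → Bool) :
    isingP θ chainA x = 1/2 * ((if x 0 = x 1 then 1-θ else θ) * (if x 1 = x 2 then 1-θ else θ)) := by
  rw [isingP, chainA_edgeFinset, Finset.prod_insert (by simp [Sym2.eq_iff]),
    Finset.prod_singleton]
  simp [pairWeight]

lemma marg2_01 (Q : (Fin 3 → Bool) → ℝ) (a b : Bool) :
    marg2 Q 0 1 a b = Q ![a,b,false] + Q ![a,b,true] := by
  rw [marg2, Finset.sum_filter, sum8]
  cases a <;> cases b <;> norm_num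

lemma marg2_02 (Q : (Fin 3 → Bool) → ℝ) (a c : Bool) :
    marg2 Q 0 2 a c = Q ![a,false,c] + Q ![a,true,c] := by
  rw [marg2, Finset.sum_filter, sum8]
  cases a <;> cases c <;> norm_num [Matrix.cons_val_two]

lemma marg1_0 (Q : (Fin 3 → Bool) → ℝ) (a : Bool) :
    marg1 Q 0 a = Q ![a,false,false] + Q ![a,false,true] + Q ![a,true,false] + Q ![a,true,true] := by
  rw [marg1, Finset.sum_filter, sum8]
  cases a <;> norm_num

lemma marg1_1 (Q : (Fin 3 → Bool) → ℝ) (b : Bool) :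
    marg1 Q 1 b = Q ![false,b,false] + Q ![false,b,true] + Q ![true,b,false] + Q ![true,b,true] := by
  rw [marg1, Finset.sum_filter, sum8]
  cases b <;> norm_num

lemma marg1_2 (Q : (Fin 3 → Bool) → ℝ) (c : Bool) :
    marg1 Q 2 c = Q ![false,false,c] + Q ![false,true,c] + Q ![true,false,c] + Q ![true,true,c] := by
  rw [marg1, Finset.sum_filter, sum8]
  cases c <;> norm_num [Matrix.cons_val_two]
lemma expand_klDiv (θ : ℝ) (Q : (Fin 3 → Bool) → ℝ) :
    klDiv Q (isingP θ chainA) = Q ![false,false,false] * Real.log (Q ![false,false,false] / (1 / 2 * ((1 - θ) * (1 - θ)))) + Q ![false,false,true] * Real.log (Q ![false,false,true] / (1 / 2 * ((1 - θ) * θ))) + Q ![false,true,false] * Real.log (Q ![false,true,false] / (1 / 2 * (θ * θ))) + Q ![false,true,true] * Real.log (Q ![false,true,true] / (1 / 2 * (θ * (1 - θ)))) + Q ![true,false,false] * Real.log (Q ![true,false,false] / (1 / 2 * (θ * (1 - θ)))) + Q ![true,false,true] * Real.log (Q ![true,false,true] / (1 / 2 * (θ * θ))) + Q ![true,true,false]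 * Real.log (Q ![true,true,false] / (1 / 2 * ((1 - θ) * θ))) + Q ![true,true,true] * Real.log (Q ![true,true,true] / (1 / 2 * ((1 - θ) * (1 - θ)))) := by
  rw [klDiv, sum8]
  rw [isingP_atom, isingP_atom, isingP_atom, isingP_atom,
    isingP_atom, isingP_atom, isingP_atom, isingP_atom]
  norm_num [Matrix.cons_val_two]

lemma expand_I01 (Q : (Fin 3 → Bool) → ℝ) :
    mutInf Q 0 1 = (Q ![false,false,false] + Q ![false,false,true]) * Real.log ((Q ![false,false,false] + Q ![false,false,true]) / ((Q ![false,false,false] + Q ![false,false,true] + Q ![false,true,false] + Q ![false,true,true]) * (Q ![false,false,false] + Q ![false,false,true] + Q ![true,false,false] + Q ![true,false,true]))) + (Q ![false,true,false] + Q ![false,true,true]) * Real.log ((Q ![false,true,false] + Q ![false,true,true]) / ((Q ![false,false,false] + Q ![false,false,true] + Q ![false,true,false] + Q ![false,true,true]) * (Q ![false,true,false] + Q ![false,true,true] + Q ![true,true,false] + Q ![true,true,true]))) + (Q ![true,false,false] + Q ![true,false,true]) * Real.log ((Q ![true,false,false] + Q ![true,false,true]) / ((Q ![true,false,false] + Q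 ![true,false,true] + Q ![true,true,false] + Q ![true,true,true]) * (Q ![false,false,false] + Q ![false,false,true] + Q ![true,false,false] + Q ![true,false,true]))) + (Q ![true,true,false] + Q ![true,true,true]) * Real.log ((Q ![true,true,false] + Q ![true,true,true]) / ((Q ![true,false,false] + Q ![true,false,true] + Q ![true,true,false] + Q ![true,true,true]) * (Q ![false,true,false] + Q ![false,true,true] + Q ![true,true,false] + Q ![true,true,true]))) := by
  rw [mutInf]
  simp only [Fintype.sum_bool, marg2_01, marg1_0, marg1_1]
  ring

lemma expand_I02 (Q : (Fin 3 → Bool) → ℝ) :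
    mutInf Q 0 2 = (Q ![false,false,false] + Q ![false,true,false]) * Real.log ((Q ![false,false,false] + Q ![false,true,false]) / ((Q ![false,false,false] + Q ![false,false,true] + Q ![false,true,false] + Q ![false,true,true]) * (Q ![false,false,false] + Q ![false,true,false] + Q ![true,false,false] + Q ![true,true,false]))) + (Q ![false,false,true] + Q ![false,true,true]) * Real.log ((Q ![false,false,true] + Q ![false,true,true]) / ((Q ![false,false,false] + Q ![false,false,true] + Q ![false,true,false] + Q ![false,true,true]) * (Q ![false,false,true] + Q ![false,true,true] + Q ![true,false,true] + Q ![true,true,true]))) + (Q ![true,false,false] + Q ![true,true,false]) * Real.log ((Q ![true,false,false] + Q ![true,true,false]) / ((Q ![true,false,false] + Q ![true,false,true] + Q ![true,true,false] + Q ![true,true,true]) * (Q ![false,false,false] + Q ![false,true,false] + Q ![true,false,false] + Q ![true,true,false]))) + (Q ![true,false,true] + Q ![true,true,true]) * Real.log ((Q ![true,false,true] + Q ![true,true,true]) / ((Q ![true,false,false] + Q ![true,false,true] + Q ![true,true,false] + Q ![true,true,true]) * (Q ![false,false,true] + Q ![false,true,true] + Q ![true,false,true] + Q ![true,true,true])))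 := by
  rw [mutInf]
  simp only [Fintype.sum_bool, marg2_02, marg1_0, marg1_2]
  ring


lemma coreLower (θ : ℝ) (hθ0 : 0 < θ) (hθ1 : θ < 1 / 2)
    (m0 m1 m2 m3 m4 m5 m6 m7 : ℝ)
    (hn0 : 0 ≤ m0) (hn1 : 0 ≤ m1) (hn2 : 0 ≤ m2) (hn3 : 0 ≤ m3)
    (hn4 : 0 ≤ m4) (hn5 : 0 ≤ m5) (hn6 : 0 ≤ m6) (hn7 : 0 ≤ m7)
    (hsum : m0 + m1 + m2 + m3 + m4 + m5 + m6 + m7 = 1)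
    (hmi : (m0 + m1) * Real.log ((m0 + m1) / ((m0 + m1 + m2 + m3) * (m0 + m1 + m4 + m5))) + (m2 + m3) * Real.log ((m2 + m3) / ((m0 + m1 + m2 + m3) * (m2 + m3 + m6 + m7))) + (m4 + m5) * Real.log ((m4 + m5) / ((m4 + m5 + m6 + m7) * (m0 + m1 + m4 + m5))) + (m6 + m7) * Real.log ((m6 + m7) / ((m4 + m5 + m6 + m7) * (m2 + m3 + m6 + m7))) ≤ (m0 + m2) * Real.log ((m0 + m2) / ((m0 + m1 + m2 + m3) * (m0 + m2 + m4 + m6))) + (m1 + m3) * Real.log ((m1 + m3) / ((m0 + m1 + m2 + m3) * (m1 + m3 + m5 + m7))) + (m4 + m6) * Real.log ((m4 + m6) / ((m4 + m5 + m6 + m7) * (m0 + m2 + m4 + m6))) + (m5 + m7) * Real.log ((m5 + m7) / ((m4 + m5 + m6 + m7) * (m1 + m3 + m5 + m7)))) :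
    -Real.log (1 - θ * (1 - Real.sqrt (4 * θ * (1 - θ)))) ≤ m0 * Real.log (m0 / (1 / 2 * ((1 - θ) * (1 - θ)))) + m1 * Real.log (m1 / (1 / 2 * ((1 - θ) * θ))) + m2 * Real.log (m2 / (1 / 2 * (θ * θ))) + m3 * Real.log (m3 / (1 / 2 * (θ * (1 - θ)))) + m4 * Real.log (m4 / (1 / 2 * (θ * (1 - θ)))) + m5 * Real.log (m5 / (1 / 2 * (θ * θ))) + m6 * Real.log (m6 / (1 / 2 * ((1 - θ) * θ))) + m7 * Real.log (m7 / (1 / 2 * ((1 - θ) * (1 - θ)))) := by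
  have h1θ : (0:ℝ) < 1 - θ := by linarith
  set s := Real.sqrt (θ * (1 - θ)) with hs_def
  have hs0 : 0 < s := Real.sqrt_pos.mpr (by positivity)
  have hs2 : s ^ 2 = θ * (1 - θ) := Real.sq_sqrt (by positivity)
  have hsθ : θ < s := by nlinarith
  have hs1θ : s < 1 - θ := by nlinarith
  have hshalf : s < 1 / 2 := by nlinarith [sq_nonneg (1 - 2*θ)]
  set Z := 1 - θ + 2 * θ * s with hZ_def
  have hZ0 : 0 < Z := by have := mul_pos (mul_pos two_pos hθ0) hs0; rw [hZ_def]; linarith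
  set pstar := θ * (1 - θ + s) / Z with hp_def
  have hp0 : 0 < pstar := div_pos (mul_pos hθ0 (by linarith)) hZ0
  have hpZ : pstar * Z = θ * (1 - θ + s) := by
    rw [hp_def]; exact div_mul_cancel₀ _ (ne_of_gt hZ0)
  have h1pZ : (1 - pstar) * Z = (1 - θ) ^ 2 + θ * s := by
    have : (1 - pstar) * Z = Z - pstar * Z := by ring
    rw [this, hpZ, hZ_def]; ring
  have hphalf : pstar < 1 / 2 := by nlinarith [hpZ, h1pZ, hZ0, hs2, hs1θ, hsθ]
  have hp1 : pstar < 1 := by linarith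
  have hγ0 : 0 < Real.log (1 - pstar) - Real.log pstar :=
    sub_pos.mpr (Real.log_lt_log hp0 (by linarith))
  set lam := (Real.log (1 - θ) - Real.log θ) / 2 / (Real.log (1 - pstar) - Real.log pstar) with hlam_def
  have hc0 : 0 < (Real.log (1 - θ) - Real.log θ) / 2 := by
    have := Real.log_lt_log hθ0 (by linarith : θ < 1 - θ); linarith
  have hlam0 : 0 < lam := div_pos hc0 hγ0
  have hrel : (Real.log (1 - θ) - Real.log θ) / 2 = lam * (Real.log (1 - pstar) - Real.log pstar) := by
    rw [hlam_def, div_mul_cancel₀ _ (ne_of_gt hγ0)]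
  -- lam < 1
  have hkey : s * (1 - θ + s) < (1 - θ) ^ 2 + θ * s := by nlinarith
  have hA0 : (0:ℝ) < s * (1 - θ + s) := mul_pos hs0 (by linarith)
  have h1p0 : (0:ℝ) < 1 - pstar := by linarith
  have hfrac : (1 - θ) / θ < ((1 - pstar) / pstar) ^ 2 := by
    rw [div_pow, div_lt_div_iff₀ hθ0 (by positivity)]
    have hsq : (s * (1 - θ + s)) ^ 2 < ((1 - θ) ^ 2 + θ * s) ^ 2 := by nlinarith
    have hL : (1 - θ) * (pstar * Z) ^ 2 = θ * (s * (1 - θ + s)) ^ 2 := by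
      rw [hpZ]; linear_combination (-θ * (1 - θ + s) ^ 2) * hs2
    have hR : θ * (s * (1 - θ + s)) ^ 2 < θ * ((1 - pstar) * Z) ^ 2 := by
      rw [h1pZ]; exact mul_lt_mul_of_pos_left hsq hθ0
    have hfin : (1 - θ) * pstar ^ 2 * Z ^ 2 < (1 - pstar) ^ 2 * θ * Z ^ 2 := by nlinarith [hL, hR]
    exact lt_of_mul_lt_mul_right hfin (le_of_lt (by positivity))
  have hlam1 : lam < 1 := by
    rw [hlam_def, div_lt_one hγ0]
    have h2 := Real.log_lt_log (by positivity) hfrac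
    rw [Real.log_div (ne_of_gt h1θ) (ne_of_gt hθ0), Real.log_pow,
      Real.log_div (ne_of_gt h1p0) (ne_of_gt hp0)] at h2
    push_cast at h2
    linarith
  have hLs : 2 * Real.log s = Real.log θ + Real.log (1 - θ) := by
    rw [hs_def, Real.log_sqrt (by positivity), Real.log_mul (ne_of_gt hθ0) (ne_of_gt h1θ)]
    ring
  have hK : 1 - θ * (1 - Real.sqrt (4 * θ * (1 - θ))) = Z := by
    rw [show 4 * θ * (1 - θ) = (2 * s) ^ 2 by rw [mul_pow, hs2]; ring,
      Real.sqrt_sq (by positivity), hZ_def]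
    ring
  rw [hK]
  have hPA : (0:ℝ) < 1 / 2 * ((1 - θ) * (1 - θ)) := by positivity
  have hPB : (0:ℝ) < 1 / 2 * ((1 - θ) * θ) := by positivity
  have hPC : (0:ℝ) < 1 / 2 * (θ * θ) := by positivity
  have hPD : (0:ℝ) < 1 / 2 * (θ * (1 - θ)) := by positivity
  rw [term_split1 hn0 hPA]
  rw [term_split1 hn1 hPB]
  rw [term_split1 hn2 hPC]
  rw [term_split1 hn3 hPD]
  rw [term_split1 hn4 hPD]
  rw [term_split1 hn5 hPC]
  rw [term_split1 hn6 hPB]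
  rw [term_split1 hn7 hPA]
  have hLPA : Real.log (1 / 2 * ((1 - θ) * (1 - θ))) = -Real.log 2 + (Real.log (1 - θ) + Real.log (1 - θ)) := by
    rw [Real.log_mul (by norm_num) (ne_of_gt (mul_pos h1θ h1θ)),
      Real.log_mul (ne_of_gt h1θ) (ne_of_gt h1θ), one_div, Real.log_inv]
  have hLPB : Real.log (1 / 2 * ((1 - θ) * θ)) = -Real.log 2 + (Real.log (1 - θ) + Real.log θ) := by
    rw [Real.log_mul (by norm_num) (ne_of_gt (mul_pos h1θ hθ0)),
      Real.log_mul (ne_of_gt h1θ) (ne_of_gt hθ0), one_div, Real.log_inv]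
  have hLPC : Real.log (1 / 2 * (θ * θ)) = -Real.log 2 + (Real.log θ + Real.log θ) := by
    rw [Real.log_mul (by norm_num) (ne_of_gt (mul_pos hθ0 hθ0)),
      Real.log_mul (ne_of_gt hθ0) (ne_of_gt hθ0), one_div, Real.log_inv]
  have hLPD : Real.log (1 / 2 * (θ * (1 - θ))) = -Real.log 2 + (Real.log θ + Real.log (1 - θ)) := by
    rw [Real.log_mul (by norm_num) (ne_of_gt (mul_pos hθ0 h1θ)),
      Real.log_mul (ne_of_gt hθ0) (ne_of_gt h1θ), one_div, Real.log_inv]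
  rw [hLPA, hLPB, hLPC, hLPD]
  rw [term_split2 (by linarith : (0:ℝ) ≤ m0 + m1) (by linarith : (m0 + m1:ℝ) ≤ m0 + m1 + m2 + m3) (by linarith : (m0 + m1:ℝ) ≤ m0 + m1 + m4 + m5)] at hmi
  rw [term_split2 (by linarith : (0:ℝ) ≤ m2 + m3) (by linarith : (m2 + m3:ℝ) ≤ m0 + m1 + m2 + m3) (by linarith : (m2 + m3:ℝ) ≤ m2 + m3 + m6 + m7)] at hmi
  rw [term_split2 (by linarith : (0:ℝ) ≤ m4 + m5) (by linarith : (m4 + m5:ℝ) ≤ m4 + m5 + m6 + m7) (by linarith : (m4 + m5:ℝ) ≤ m0 + m1 + m4 + m5)] at hmi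
  rw [term_split2 (by linarith : (0:ℝ) ≤ m6 + m7) (by linarith : (m6 + m7:ℝ) ≤ m4 + m5 + m6 + m7) (by linarith : (m6 + m7:ℝ) ≤ m2 + m3 + m6 + m7)] at hmi
  rw [term_split2 (by linarith : (0:ℝ) ≤ m0 + m2) (by linarith : (m0 + m2:ℝ) ≤ m0 + m1 + m2 + m3) (by linarith : (m0 + m2:ℝ) ≤ m0 + m2 + m4 + m6)] at hmi
  rw [term_split2 (by linarith : (0:ℝ) ≤ m1 + m3) (by linarith : (m1 + m3:ℝ) ≤ m0 + m1 + m2 + m3) (by linarith : (m1 + m3:ℝ) ≤ m1 + m3 + m5 + m7)] at hmi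
  rw [term_split2 (by linarith : (0:ℝ) ≤ m4 + m6) (by linarith : (m4 + m6:ℝ) ≤ m4 + m5 + m6 + m7) (by linarith : (m4 + m6:ℝ) ≤ m0 + m2 + m4 + m6)] at hmi
  rw [term_split2 (by linarith : (0:ℝ) ≤ m5 + m7) (by linarith : (m5 + m7:ℝ) ≤ m4 + m5 + m6 + m7) (by linarith : (m5 + m7:ℝ) ≤ m1 + m3 + m5 + m7)] at hmi
  -- A1
  have k10 := half_pair hn0 hn7
  have k11 := half_pair hn1 hn6
  have k12 := half_pair hn3 hn4
  have k13 := half_pair hn2 hn5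
  have hA1 : 0 ≤ m0 * Real.log m0 + m7 * Real.log m7 - (m0 + m7) * Real.log (m0 + m7) + (m0 + m7) * Real.log 2 + m1 * Real.log m1 + m6 * Real.log m6 - (m1 + m6) * Real.log (m1 + m6) + (m1 + m6) * Real.log 2 + m3 * Real.log m3 + m4 * Real.log m4 - (m3 + m4) * Real.log (m3 + m4) + (m3 + m4) * Real.log 2 + m2 * Real.log m2 + m5 * Real.log m5 - (m2 + m5) * Real.log (m2 + m5) + (m2 + m5) * Real.log 2 := by linarith
  -- A2a
  have k20 : (m0 + m2 + m4 + m6) - 1/2 ≤ (m0 + m2 + m4 + m6) * (Real.log (m0 + m2 + m4 + m6) - Real.log (1/2)) :=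
    klPt (by linarith) (by norm_num) (by norm_num)
  have k21 : (m1 + m3 + m5 + m7) - 1/2 ≤ (m1 + m3 + m5 + m7) * (Real.log (m1 + m3 + m5 + m7) - Real.log (1/2)) :=
    klPt (by linarith) (by norm_num) (by norm_num)
  have hlhalf : Real.log ((1:ℝ)/2) = -Real.log 2 := by rw [one_div, Real.log_inv]
  rw [hlhalf] at k20 k21
  have hA2a : 0 ≤ (m0 + m2 + m4 + m6) * (Real.log (m0 + m2 + m4 + m6) - -Real.log 2) + (m1 + m3 + m5 + m7) * (Real.log (m1 + m3 + m5 + m7) - -Real.log 2) := by linarith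
  -- A2b
  have k30 := logSum2 (show (m0 + m2:ℝ) = m0 + m2 by ring) (show (m0 + m7 + (m2 + m5):ℝ) = (m0 + m7) + (m2 + m5) by ring)
    hn0 hn2 (by linarith : (0:ℝ) ≤ m0 + m7) (by linarith : (0:ℝ) ≤ m2 + m5)
    (by intro h; linarith) (by intro h; linarith)
  have k31 := logSum2 (show (m1 + m3:ℝ) = m1 + m3 by ring) (show (m1 + m6 + (m3 + m4):ℝ) = (m1 + m6) + (m3 + m4) by ring)
    hn1 hn3 (by linarith : (0:ℝ) ≤ m1 + m6) (by linarith : (0:ℝ) ≤ m3 + m4)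
    (by intro h; linarith) (by intro h; linarith)
  have k32 := logSum2 (show (m5 + m7:ℝ) = m7 + m5 by ring) (show (m0 + m7 + (m2 + m5):ℝ) = (m0 + m7) + (m2 + m5) by ring)
    hn7 hn5 (by linarith : (0:ℝ) ≤ m0 + m7) (by linarith : (0:ℝ) ≤ m2 + m5)
    (by intro h; linarith) (by intro h; linarith)
  have k33 := logSum2 (show (m4 + m6:ℝ) = m6 + m4 by ring) (show (m1 + m6 + (m3 + m4):ℝ) = (m1 + m6) + (m3 + m4) by ring)
    hn6 hn4 (by linarith : (0:ℝ) ≤ m1 + m6) (by linarith : (0:ℝ) ≤ m3 + m4)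
    (by intro h; linarith) (by intro h; linarith)
  have hA2b : 0 ≤ ((m0) * (Real.log (m0) - Real.log (m0 + m7)) + (m2) * (Real.log (m2) - Real.log (m2 + m5)) - ((m0 + m2) * (Real.log (m0 + m2) - Real.log (m0 + m7 + (m2 + m5))))) + ((m1) * (Real.log (m1) - Real.log (m1 + m6)) + (m3) * (Real.log (m3) - Real.log (m3 + m4)) - ((m1 + m3) * (Real.log (m1 + m3) - Real.log (m1 + m6 + (m3 + m4))))) + ((m7) * (Real.log (m7) - Real.log (m0 + m7)) + (m5) * (Real.log (m5) - Real.log (m2 + m5)) - ((m5 + m7) * (Real.log (m5 + m7) - Real.log (m0 + m7 + (m2 + m5))))) + ((m6) * (Real.log (m6) - Real.log (m1 + m6)) + (m4) * (Real.log (m4) - Real.log (m3 + m4)) - ((m4 + m6) * (Real.log (m4 + m6) - Real.log (m1 + m6 + (m3 + m4))))) := by linarith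
  -- A3
  have k40 := klPt2 (show (0:ℝ) ≤ m0 + m1 by linarith) (show (0:ℝ) ≤ m0 + m1 + m4 + m5 by linarith)
    (show (0:ℝ) ≤ m0 + m7 + (m1 + m6) by linarith) (show (m0 + m1:ℝ) ≤ m0 + m1 + m4 + m5 by linarith) (show (m0 + m1:ℝ) ≤ m0 + m7 + (m1 + m6) by linarith)
  have k41 := klPt2 (show (0:ℝ) ≤ m4 + m5 by linarith) (show (0:ℝ) ≤ m0 + m1 + m4 + m5 by linarith)
    (show (0:ℝ) ≤ m3 + m4 + (m2 + m5) by linarith) (show (m4 + m5:ℝ) ≤ m0 + m1 + m4 + m5 by linarith) (show (m4 + m5:ℝ) ≤ m3 + m4 + (m2 + m5) by linarith)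
  have k42 := klPt2 (show (0:ℝ) ≤ m6 + m7 by linarith) (show (0:ℝ) ≤ m2 + m3 + m6 + m7 by linarith)
    (show (0:ℝ) ≤ m0 + m7 + (m1 + m6) by linarith) (show (m6 + m7:ℝ) ≤ m2 + m3 + m6 + m7 by linarith) (show (m6 + m7:ℝ) ≤ m0 + m7 + (m1 + m6) by linarith)
  have k43 := klPt2 (show (0:ℝ) ≤ m2 + m3 by linarith) (show (0:ℝ) ≤ m2 + m3 + m6 + m7 by linarith)
    (show (0:ℝ) ≤ m3 + m4 + (m2 + m5) by linarith) (show (m2 + m3:ℝ) ≤ m2 + m3 + m6 + m7 by linarith) (show (m2 + m3:ℝ) ≤ m3 + m4 + (m2 + m5) by linarith)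
  have e3 : (m0 + m1 + m4 + m5) * (m0 + m7 + (m1 + m6)) + (m0 + m1 + m4 + m5) * (m3 + m4 + (m2 + m5)) + (m2 + m3 + m6 + m7) * (m0 + m7 + (m1 + m6)) + (m2 + m3 + m6 + m7) * (m3 + m4 + (m2 + m5)) = 1 := by
    have e : (m0 + m1 + m4 + m5) + (m2 + m3 + m6 + m7) = 1 := by linarith
    have e2 : (m0 + m7 + (m1 + m6)) + (m3 + m4 + (m2 + m5)) = 1 := by linarith
    linear_combination ((m0 + m7 + (m1 + m6)) + (m3 + m4 + (m2 + m5))) * e + e2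
  have hA3 : 0 ≤ (m0 + m1) * (Real.log (m0 + m1) - Real.log (m0 + m1 + m4 + m5) - Real.log (m0 + m7 + (m1 + m6))) + (m4 + m5) * (Real.log (m4 + m5) - Real.log (m0 + m1 + m4 + m5) - Real.log (m3 + m4 + (m2 + m5))) + (m6 + m7) * (Real.log (m6 + m7) - Real.log (m2 + m3 + m6 + m7) - Real.log (m0 + m7 + (m1 + m6))) + (m2 + m3) * (Real.log (m2 + m3) - Real.log (m2 + m3 + m6 + m7) - Real.log (m3 + m4 + (m2 + m5))) := by linarith
  -- A5
  have hg00 : (0:ℝ) < (1 - θ) * (1 - θ) / Z := by positivity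
  have hg01 : (0:ℝ) < θ * s / Z := by positivity
  have hg10 : (0:ℝ) < θ * (1 - θ) / Z := by positivity
  have k50 := logSum2 (show (m1 + m6 + (m3 + m4):ℝ) = (m1 + m6) + (m3 + m4) from rfl)
    (show pstar = θ * s / Z + θ * (1 - θ) / Z by rw [hp_def]; field_simp; ring)
    (show (0:ℝ) ≤ m1 + m6 by linarith) (show (0:ℝ) ≤ m3 + m4 by linarith) hg01.le hg10.le
    (fun h => absurd h (ne_of_gt hg01)) (fun h => absurd h (ne_of_gt hg10))
  have k51 := logSum2 (show (m0 + m7 + (m2 + m5):ℝ) = (m0 + m7) + (m2 + m5) from rfl)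
    (show 1 - pstar = (1 - θ) * (1 - θ) / Z + θ * s / Z by
      have : 1 - pstar = ((1 - θ) ^ 2 + θ * s) / Z := by
        rw [eq_div_iff (ne_of_gt hZ0)]; linarith [h1pZ]
      rw [this]; field_simp)
    (show (0:ℝ) ≤ m0 + m7 by linarith) (show (0:ℝ) ≤ m2 + m5 by linarith) hg00.le hg01.le
    (fun h => absurd h (ne_of_gt hg00)) (fun h => absurd h (ne_of_gt hg01))
  have hLG00 : Real.log ((1 - θ) * (1 - θ) / Z) = Real.log (1 - θ) + Real.log (1 - θ) - Real.log Z := by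
    rw [Real.log_div (ne_of_gt (mul_pos h1θ h1θ)) (ne_of_gt hZ0), Real.log_mul (ne_of_gt h1θ) (ne_of_gt h1θ)]
  have hLG01 : Real.log (θ * s / Z) = Real.log θ + Real.log s - Real.log Z := by
    rw [Real.log_div (ne_of_gt (mul_pos hθ0 hs0)) (ne_of_gt hZ0), Real.log_mul (ne_of_gt hθ0) (ne_of_gt hs0)]
  have hLG10 : Real.log (θ * (1 - θ) / Z) = Real.log θ + Real.log (1 - θ) - Real.log Z := by
    rw [Real.log_div (ne_of_gt (mul_pos hθ0 h1θ)) (ne_of_gt hZ0), Real.log_mul (ne_of_gt hθ0) (ne_of_gt h1θ)]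
  rw [hLG01, hLG10] at k50
  rw [hLG00, hLG01] at k51
  have hA5 : 0 ≤ (m1 + m6) * (Real.log (m1 + m6) - (Real.log θ + Real.log s - Real.log Z)) + (m3 + m4) * (Real.log (m3 + m4) - (Real.log θ + Real.log (1 - θ) - Real.log Z)) - ((m1 + m6 + (m3 + m4)) * (Real.log (m1 + m6 + (m3 + m4)) - Real.log pstar)) + ((m0 + m7) * (Real.log (m0 + m7) - (Real.log (1 - θ) + Real.log (1 - θ) - Real.log Z)) + (m2 + m5) * (Real.log (m2 + m5) - (Real.log θ + Real.log s - Real.log Z)) - ((m0 + m7 + (m2 + m5)) * (Real.log (m0 + m7 + (m2 + m5)) - Real.log (1 - pstar)))) := by linarith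
  -- A6, A7
  have k60 : (m1 + m6 + (m3 + m4)) - pstar ≤ (m1 + m6 + (m3 + m4)) * (Real.log (m1 + m6 + (m3 + m4)) - Real.log pstar) :=
    klPt (by linarith) hp0.le (fun h => absurd h (ne_of_gt hp0))
  have k61 : (m0 + m7 + (m2 + m5)) - (1 - pstar) ≤ (m0 + m7 + (m2 + m5)) * (Real.log (m0 + m7 + (m2 + m5)) - Real.log (1 - pstar)) :=
    klPt (by linarith) (by linarith) (fun h => absurd h (by linarith))
  have hA6 : 0 ≤ (m1 + m6 + (m3 + m4)) * (Real.log (m1 + m6 + (m3 + m4)) - Real.log pstar) + (m0 + m7 + (m2 + m5)) * (Real.log (m0 + m7 + (m2 + m5)) - Real.log (1 - pstar)) := by linarith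
  have k70 : (m3 + m4 + (m2 + m5)) - pstar ≤ (m3 + m4 + (m2 + m5)) * (Real.log (m3 + m4 + (m2 + m5)) - Real.log pstar) :=
    klPt (by linarith) hp0.le (fun h => absurd h (ne_of_gt hp0))
  have k71 : (m0 + m7 + (m1 + m6)) - (1 - pstar) ≤ (m0 + m7 + (m1 + m6)) * (Real.log (m0 + m7 + (m1 + m6)) - Real.log (1 - pstar)) :=
    klPt (by linarith) (by linarith) (fun h => absurd h (by linarith))
  have hA7 : 0 ≤ (m3 + m4 + (m2 + m5)) * (Real.log (m3 + m4 + (m2 + m5)) - Real.log pstar) + (m0 + m7 + (m1 + m6)) * (Real.log (m0 + m7 + (m1 + m6)) - Real.log (1 - pstar)) := by linarith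
  -- master identity
  have master : m0 * (Real.log m0 - (-Real.log 2 + (Real.log (1 - θ) + Real.log (1 - θ)))) + m1 * (Real.log m1 - (-Real.log 2 + (Real.log (1 - θ) + Real.log θ))) + m2 * (Real.log m2 - (-Real.log 2 + (Real.log θ + Real.log θ))) + m3 * (Real.log m3 - (-Real.log 2 + (Real.log θ + Real.log (1 - θ)))) + m4 * (Real.log m4 - (-Real.log 2 + (Real.log θ + Real.log (1 - θ)))) + m5 * (Real.log m5 - (-Real.log 2 + (Real.log θ + Real.log θ))) + m6 * (Real.log m6 - (-Real.log 2 + (Real.log (1 - θ) + Real.log θ))) + m7 * (Real.log m7 - (-Real.log 2 + (Real.log (1 - θ) + Real.log (1 - θ)))) =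
      -Real.log Z * (m0 + m1 + m2 + m3 + m4 + m5 + m6 + m7)
      + lam * (((m0 + m2) * (Real.log (m0 + m2) - Real.log (m0 + m1 + m2 + m3) - Real.log (m0 + m2 + m4 + m6)) + (m1 + m3) * (Real.log (m1 + m3) - Real.log (m0 + m1 + m2 + m3) - Real.log (m1 + m3 + m5 + m7)) + (m4 + m6) * (Real.log (m4 + m6) - Real.log (m4 + m5 + m6 + m7) - Real.log (m0 + m2 + m4 + m6)) + (m5 + m7) * (Real.log (m5 + m7) - Real.log (m4 + m5 + m6 + m7) - Real.log (m1 + m3 + m5 + m7))) - ((m0 + m1) * (Real.log (m0 + m1) - Real.log (m0 + m1 + m2 + m3) - Real.log (m0 + m1 + m4 + m5)) + (m2 + m3) * (Real.log (m2 + m3) - Real.log (m0 + m1 + m2 + m3) - Real.log (m2 + m3 + m6 + m7)) + (m4 + m5) * (Real.log (m4 + m5) - Real.log (m4 + m5 + m6 + m7) - Real.log (m0 + m1 + m4 + m5)) + (m6 + m7) * (Real.log (m6 + m7) - Real.log (m4 + m5 + m6 + m7) - Real.log (m2 + m3 + m6 + m7))))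
      + ((1 - lam) * (m0 * Real.log m0 + m7 * Real.log m7 - (m0 + m7) * Real.log (m0 + m7) + (m0 + m7) * Real.log 2 + m1 * Real.log m1 + m6 * Real.log m6 - (m1 + m6) * Real.log (m1 + m6) + (m1 + m6) * Real.log 2 + m3 * Real.log m3 + m4 * Real.log m4 - (m3 + m4) * Real.log (m3 + m4) + (m3 + m4) * Real.log 2 + m2 * Real.log m2 + m5 * Real.log m5 - (m2 + m5) * Real.log (m2 + m5) + (m2 + m5) * Real.log 2) + lam * ((m0 + m2 + m4 + m6) * (Real.log (m0 + m2 + m4 + m6) - -Real.log 2) + (m1 + m3 + m5 + m7) * (Real.log (m1 + m3 + m5 + m7) - -Real.log 2)) + lam * (((m0) * (Real.log (m0) - Real.log (m0 + m7)) + (m2) * (Real.log (m2) - Real.log (m2 + m5)) - ((m0 + m2) * (Real.log (m0 + m2) - Real.log (m0 + m7 + (m2 + m5))))) + ((m1) * (Real.log (m1) - Real.log (m1 + m6)) + (m3) * (Real.log (m3) - Real.log (m3 + m4)) - ((m1 + m3) * (Real.log (m1 + m3) - Real.log (m1 + m6 + (m3 + m4))))) + ((m7) * (Real.log (m7) - Real.log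 (m0 + m7)) + (m5) * (Real.log (m5) - Real.log (m2 + m5)) - ((m5 + m7) * (Real.log (m5 + m7) - Real.log (m0 + m7 + (m2 + m5))))) + ((m6) * (Real.log (m6) - Real.log (m1 + m6)) + (m4) * (Real.log (m4) - Real.log (m3 + m4)) - ((m4 + m6) * (Real.log (m4 + m6) - Real.log (m1 + m6 + (m3 + m4)))))) + lam * ((m0 + m1) * (Real.log (m0 + m1) - Real.log (m0 + m1 + m4 + m5) - Real.log (m0 + m7 + (m1 + m6))) + (m4 + m5) * (Real.log (m4 + m5) - Real.log (m0 + m1 + m4 + m5) - Real.log (m3 + m4 + (m2 + m5))) + (m6 + m7) * (Real.log (m6 + m7) - Real.log (m2 + m3 + m6 + m7) - Real.log (m0 + m7 + (m1 + m6))) + (m2 + m3) * (Real.log (m2 + m3) - Real.log (m2 + m3 + m6 + m7) - Real.log (m3 + m4 + (m2 + m5))))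
         + ((m1 + m6) * (Real.log (m1 + m6) - (Real.log θ + Real.log s - Real.log Z)) + (m3 + m4) * (Real.log (m3 + m4) - (Real.log θ + Real.log (1 - θ) - Real.log Z)) - ((m1 + m6 + (m3 + m4)) * (Real.log (m1 + m6 + (m3 + m4)) - Real.log pstar)) + ((m0 + m7) * (Real.log (m0 + m7) - (Real.log (1 - θ) + Real.log (1 - θ) - Real.log Z)) + (m2 + m5) * (Real.log (m2 + m5) - (Real.log θ + Real.log s - Real.log Z)) - ((m0 + m7 + (m2 + m5)) * (Real.log (m0 + m7 + (m2 + m5)) - Real.log (1 - pstar))))) + (1 - lam) * ((m1 + m6 + (m3 + m4)) * (Real.log (m1 + m6 + (m3 + m4)) - Real.log pstar) + (m0 + m7 + (m2 + m5)) * (Real.log (m0 + m7 + (m2 + m5)) - Real.log (1 - pstar))) + lam * ((m3 + m4 + (m2 + m5)) * (Real.log (m3 + m4 + (m2 + m5)) - Real.log pstar) + (m0 + m7 + (m1 + m6)) * (Real.log (m0 + m7 + (m1 + m6)) - Real.log (1 - pstar)))) := by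
    linear_combination (m2 + m5 - (m1 + m6)) * hrel + ((m1 + m6 + (m2 + m5)) / 2) * hLs
  rw [master, hsum, mul_one]
  have hmul : 0 ≤ lam * (((m0 + m2) * (Real.log (m0 + m2) - Real.log (m0 + m1 + m2 + m3) - Real.log (m0 + m2 + m4 + m6)) + (m1 + m3) * (Real.log (m1 + m3) - Real.log (m0 + m1 + m2 + m3) - Real.log (m1 + m3 + m5 + m7)) + (m4 + m6) * (Real.log (m4 + m6) - Real.log (m4 + m5 + m6 + m7) - Real.log (m0 + m2 + m4 + m6)) + (m5 + m7) * (Real.log (m5 + m7) - Real.log (m4 + m5 + m6 + m7) - Real.log (m1 + m3 + m5 + m7))) - ((m0 + m1) * (Real.log (m0 + m1) - Real.log (m0 + m1 + m2 + m3) - Real.log (m0 + m1 + m4 + m5)) + (m2 + m3) * (Real.log (m2 + m3) - Real.log (m0 + m1 + m2 + m3) - Real.log (m2 + m3 + m6 + m7)) + (m4 + m5) * (Real.log (m4 + m5) - Real.log (m4 + m5 + m6 + m7) - Real.log (m0 + m1 + m4 + m5)) + (m6 + m7) * (Real.log (m6 + m7) - Real.log (m4 + m5 + m6 + m7) - Real.log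 (m2 + m3 + m6 + m7)))) :=
    mul_nonneg hlam0.le (by linarith)
  have w1 : 0 ≤ (1 - lam) * (m0 * Real.log m0 + m7 * Real.log m7 - (m0 + m7) * Real.log (m0 + m7) + (m0 + m7) * Real.log 2 + m1 * Real.log m1 + m6 * Real.log m6 - (m1 + m6) * Real.log (m1 + m6) + (m1 + m6) * Real.log 2 + m3 * Real.log m3 + m4 * Real.log m4 - (m3 + m4) * Real.log (m3 + m4) + (m3 + m4) * Real.log 2 + m2 * Real.log m2 + m5 * Real.log m5 - (m2 + m5) * Real.log (m2 + m5) + (m2 + m5) * Real.log 2) := mul_nonneg (by linarith) hA1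
  have w2 : 0 ≤ lam * ((m0 + m2 + m4 + m6) * (Real.log (m0 + m2 + m4 + m6) - -Real.log 2) + (m1 + m3 + m5 + m7) * (Real.log (m1 + m3 + m5 + m7) - -Real.log 2)) := mul_nonneg hlam0.le hA2a
  have w3 : 0 ≤ lam * (((m0) * (Real.log (m0) - Real.log (m0 + m7)) + (m2) * (Real.log (m2) - Real.log (m2 + m5)) - ((m0 + m2) * (Real.log (m0 + m2) - Real.log (m0 + m7 + (m2 + m5))))) + ((m1) * (Real.log (m1) - Real.log (m1 + m6)) + (m3) * (Real.log (m3) - Real.log (m3 + m4)) - ((m1 + m3) * (Real.log (m1 + m3) - Real.log (m1 + m6 + (m3 + m4))))) + ((m7) * (Real.log (m7) - Real.log (m0 + m7)) + (m5) * (Real.log (m5) - Real.log (m2 + m5)) - ((m5 + m7) * (Real.log (m5 + m7) - Real.log (m0 + m7 + (m2 + m5))))) + ((m6) * (Real.log (m6) - Real.log (m1 + m6)) + (m4) * (Real.log (m4) - Real.log (m3 + m4)) - ((m4 + m6) * (Real.log (m4 + m6) - Real.log (m1 + m6 + (m3 + m4)))))) := mul_nonneg hlam0.le hA2b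
  have w4 : 0 ≤ lam * ((m0 + m1) * (Real.log (m0 + m1) - Real.log (m0 + m1 + m4 + m5) - Real.log (m0 + m7 + (m1 + m6))) + (m4 + m5) * (Real.log (m4 + m5) - Real.log (m0 + m1 + m4 + m5) - Real.log (m3 + m4 + (m2 + m5))) + (m6 + m7) * (Real.log (m6 + m7) - Real.log (m2 + m3 + m6 + m7) - Real.log (m0 + m7 + (m1 + m6))) + (m2 + m3) * (Real.log (m2 + m3) - Real.log (m2 + m3 + m6 + m7) - Real.log (m3 + m4 + (m2 + m5)))) := mul_nonneg hlam0.le hA3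
  have w6 : 0 ≤ (1 - lam) * ((m1 + m6 + (m3 + m4)) * (Real.log (m1 + m6 + (m3 + m4)) - Real.log pstar) + (m0 + m7 + (m2 + m5)) * (Real.log (m0 + m7 + (m2 + m5)) - Real.log (1 - pstar))) := mul_nonneg (by linarith) hA6
  have w7 : 0 ≤ lam * ((m3 + m4 + (m2 + m5)) * (Real.log (m3 + m4 + (m2 + m5)) - Real.log pstar) + (m0 + m7 + (m1 + m6)) * (Real.log (m0 + m7 + (m1 + m6)) - Real.log (1 - pstar))) := mul_nonneg hlam0.le hA7
  linarith [hmul, w1, w2, w3, w4, hA5, w6, w7]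


lemma memberQ (θ : ℝ) (hθ0 : 0 < θ) (hθ1 : θ < 1/2) :
    ∃ Q : (Fin 3 → Bool) → ℝ, (∀ x, 0 ≤ Q x) ∧ (∑ x : Fin 3 → Bool, Q x = 1) ∧
      mutInf Q 0 1 ≤ mutInf Q 0 2 ∧
      -Real.log (1 - θ * (1 - Real.sqrt (4 * θ * (1 - θ)))) = klDiv Q (isingP θ chainA) := by
  have h1θ : (0:ℝ) < 1 - θ := by linarith
  set s := Real.sqrt (θ * (1 - θ)) with hs_def
  have hs0 : 0 < s := Real.sqrt_pos.mpr (by positivity)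
  have hs2 : s ^ 2 = θ * (1 - θ) := Real.sq_sqrt (by positivity)
  set Z := 1 - θ + 2 * θ * s with hZ_def
  have hZ0 : 0 < Z := by have := mul_pos (mul_pos two_pos hθ0) hs0; rw [hZ_def]; linarith
  have hLs : 2 * Real.log s = Real.log θ + Real.log (1 - θ) := by
    rw [hs_def, Real.log_sqrt (by positivity), Real.log_mul (ne_of_gt hθ0) (ne_of_gt h1θ)]
    ring
  have hK : 1 - θ * (1 - Real.sqrt (4 * θ * (1 - θ))) = Z := by
    rw [show 4 * θ * (1 - θ) = (2 * s) ^ 2 by rw [mul_pow, hs2]; ring,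
      Real.sqrt_sq (by positivity), hZ_def]
    ring
  set Q0 : (Fin 3 → Bool) → ℝ := fun x =>
    1/2 * (if x 0 = x 1 then (if x 1 = x 2 then (1-θ)*(1-θ)/Z else θ*s/Z)
      else (if x 1 = x 2 then θ*(1-θ)/Z else θ*s/Z)) with hQ0_def
  have hv0 : Q0 ![false,false,false] = 1/2 * ((1-θ)*(1-θ)/Z) := by rw [hQ0_def]; norm_num [Matrix.cons_val_two]
  have hv1 : Q0 ![false,false,true] = 1/2 * (θ*s/Z) := by rw [hQ0_def]; norm_num [Matrix.cons_val_two]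
  have hv2 : Q0 ![false,true,false] = 1/2 * (θ*s/Z) := by rw [hQ0_def]; norm_num [Matrix.cons_val_two]
  have hv3 : Q0 ![false,true,true] = 1/2 * (θ*(1-θ)/Z) := by rw [hQ0_def]; norm_num [Matrix.cons_val_two]
  have hv4 : Q0 ![true,false,false] = 1/2 * (θ*(1-θ)/Z) := by rw [hQ0_def]; norm_num [Matrix.cons_val_two]
  have hv5 : Q0 ![true,false,true] = 1/2 * (θ*s/Z) := by rw [hQ0_def]; norm_num [Matrix.cons_val_two]
  have hv6 : Q0 ![true,true,false] = 1/2 * (θ*s/Z) := by rw [hQ0_def]; norm_num [Matrix.cons_val_two]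
  have hv7 : Q0 ![true,true,true] = 1/2 * ((1-θ)*(1-θ)/Z) := by rw [hQ0_def]; norm_num [Matrix.cons_val_two]
  refine ⟨Q0, ?_, ?_, ?_, ?_⟩
  · intro x
    rw [hQ0_def]
    dsimp only
    split_ifs <;> positivity
  · rw [sum8, hv0, hv1, hv2, hv3, hv4, hv5, hv6, hv7]
    field_simp
    ring
  · have h : mutInf Q0 0 1 = mutInf Q0 0 2 := by
      rw [expand_I01, expand_I02, hv0, hv1, hv2, hv3, hv4, hv5, hv6, hv7]
    exact le_of_eq h
  · rw [expand_klDiv, hv0, hv1, hv2, hv3, hv4, hv5, hv6, hv7, hK]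
    have eA : Real.log (1/2 * ((1-θ)*(1-θ)/Z) / (1/2 * ((1-θ)*(1-θ)))) = -Real.log Z := by
      rw [show 1/2 * ((1-θ)*(1-θ)/Z) / (1/2 * ((1-θ)*(1-θ))) = Z⁻¹ by field_simp,
        Real.log_inv]
    have eB : Real.log (1/2 * (θ*s/Z) / (1/2 * ((1-θ)*θ))) = Real.log s - (Real.log (1-θ) + Real.log Z) := by
      rw [show 1/2 * (θ*s/Z) / (1/2 * ((1-θ)*θ)) = s/((1-θ)*Z) by field_simp,
        Real.log_div (ne_of_gt hs0) (by positivity),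
        Real.log_mul (ne_of_gt h1θ) (ne_of_gt hZ0)]
    have eC : Real.log (1/2 * (θ*s/Z) / (1/2 * (θ*θ))) = Real.log s - (Real.log θ + Real.log Z) := by
      rw [show 1/2 * (θ*s/Z) / (1/2 * (θ*θ)) = s/(θ*Z) by field_simp,
        Real.log_div (ne_of_gt hs0) (by positivity),
        Real.log_mul (ne_of_gt hθ0) (ne_of_gt hZ0)]
    have eD : Real.log (1/2 * (θ*(1-θ)/Z) / (1/2 * (θ*(1-θ)))) = -Real.log Z := by
      rw [show 1/2 * (θ*(1-θ)/Z) / (1/2 * (θ*(1-θ))) = Z⁻¹ by field_simp,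
        Real.log_inv]
    rw [eA, eB, eC, eD]
    have hgsum : 1/2 * ((1-θ)*(1-θ)/Z) + 1/2 * (θ*s/Z) + 1/2 * (θ*s/Z) + 1/2 * (θ*(1-θ)/Z)
        + (1/2 * (θ*(1-θ)/Z) + 1/2 * (θ*s/Z) + 1/2 * (θ*s/Z) + 1/2 * ((1-θ)*(1-θ)/Z)) = 1 := by
      field_simp
      ring
    linear_combination Real.log Z * hgsum - (θ*s/Z) * hLs

end StmtSevenAux

/-- the Chow-Liu error exponent for the 3-node chain: the minimum of
`D(Q‖P)` over pmfs `Q` on `{0,1}³` with `I(Q_{1,2}) ≤ I(Q_{1,3})` equals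
`-log(1 - θ(1 - √(4θ(1-θ))))`. -/
theorem stmt7 (θ : ℝ) (hθ0 : 0 < θ) (hθ1 : θ < 1 / 2) :
    IsLeast { d : ℝ | ∃ Q : (Fin 3 → Bool) → ℝ, (∀ x, 0 ≤ Q x) ∧
        (∑ x : Fin 3 → Bool, Q x = 1) ∧ mutInf Q 0 1 ≤ mutInf Q 0 2 ∧
        d = klDiv Q (isingP θ chainA) }
      (-Real.log (1 - θ * (1 - Real.sqrt (4 * θ * (1 - θ))))) := by
  constructor
  · obtain ⟨Q, h0, h1, hmi, hkl⟩ := memberQ θ hθ0 hθ1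
    exact ⟨Q, h0, h1, hmi, hkl⟩
  · rintro d ⟨Q, h0, h1, hmi, rfl⟩
    rw [expand_klDiv]
    refine coreLower θ hθ0 hθ1 _ _ _ _ _ _ _ _
      (h0 _) (h0 _) (h0 _) (h0 _) (h0 _) (h0 _) (h0 _) (h0 _) ?_ ?_
    · have h := h1; rwa [sum8] at h
    · rw [← expand_I01, ← expand_I02]; exact hmi
end
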